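/- arXiv:1807.04944 — 5 statements merged into one kernel-verified Lean document; each statement's English description precedes it below -/
import Mathlib

section
/- Let Δ ⊆ ℝ^n be a Newton polyhedron (the convex hull of a set S + ℝ_{≥0}^n for some S ⊆ ℕ^n) with a loose edge E having endpoints a and b. Then for every point c ∈ Δ and every vector ξ ∈ ℝ_{≥0}^n with ⟨ξ,a⟩ = ⟨ξ,b⟩, one has ⟨ξ,c⟩ ≥ ⟨ξ,a⟩. -/
open scoped Pointwise

noncomputable section

/-- Standard scalar product on `Fin n → ℝ`. -/
def dotR {n : ℕ} (ξ a : Fin n → ℝ) : ℝ := ∑ i, ξ i * a i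

/-- The nonnegative orthant in `Fin n → ℝ`. -/
def posOrthant (n : ℕ) : Set (Fin n → ℝ) := {x | ∀ i, 0 ≤ x i}

/-- A Newton polyhedron: the convex hull of `S + ℝ_{≥0}^n` for a nonempty `S ⊆ ℕ^n`. -/
def IsNewtonPolyhedron {n : ℕ} (Δ : Set (Fin n → ℝ)) : Prop :=
  ∃ S : Set (Fin n → ℕ), S.Nonempty ∧
    Δ = convexHull ℝ (((fun α : Fin n → ℕ => fun i => (α i : ℝ)) '' S) + posOrthant n)

/-- The face of `Δ` in direction `ξ`: the points of `Δ` minimizing `⟨ξ, ·⟩`. -/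
def faceOf {n : ℕ} (Δ : Set (Fin n → ℝ)) (ξ : Fin n → ℝ) : Set (Fin n → ℝ) :=
  {a ∈ Δ | ∀ b ∈ Δ, dotR ξ a ≤ dotR ξ b}

/-- `F` is a face of `Δ` (cut out by some `ξ` with nonnegative entries). -/
def IsFaceOf {n : ℕ} (Δ F : Set (Fin n → ℝ)) : Prop :=
  ∃ ξ : Fin n → ℝ, (∀ i, 0 ≤ ξ i) ∧ F = faceOf Δ ξ

/-- The dimension of a face: the rank of its direction space. -/
def faceDim {n : ℕ} (F : Set (Fin n → ℝ)) : ℕ := Module.finrank ℝ (vectorSpan ℝ F)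

/-- A loose edge: a compact edge not contained in any compact face of dimension ≥ 2. -/
def IsLooseEdge {n : ℕ} (Δ E : Set (Fin n → ℝ)) : Prop :=
  IsFaceOf Δ E ∧ IsCompact E ∧ faceDim E = 1 ∧
    ∀ F : Set (Fin n → ℝ), IsFaceOf Δ F → IsCompact F → E ⊆ F → faceDim F ≤ 1

/-- `v` is a vertex of `Δ` : the singleton `{v}` is a face. -/
def IsVertexOf {n : ℕ} (Δ : Set (Fin n → ℝ)) (v : Fin n → ℝ) : Prop :=
  IsFaceOf Δ {v}

namespace LooseAux

variable {n : ℕ}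

lemma dotR_add (ξ x y : Fin n → ℝ) : dotR ξ (x + y) = dotR ξ x + dotR ξ y := by
  simp [dotR, mul_add, Finset.sum_add_distrib]

lemma dotR_smul (ξ : Fin n → ℝ) (c : ℝ) (x : Fin n → ℝ) :
    dotR ξ (c • x) = c * dotR ξ x := by
  simp only [dotR, Pi.smul_apply, smul_eq_mul, Finset.mul_sum]
  exact Finset.sum_congr rfl fun i _ => by ring

lemma dotR_isLinear (ξ : Fin n → ℝ) : IsLinearMap ℝ (dotR ξ) :=
  ⟨dotR_add ξ, fun c x => dotR_smul ξ c x⟩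

lemma dotR_sub (ξ x y : Fin n → ℝ) : dotR ξ (x - y) = dotR ξ x - dotR ξ y := by
  simp [dotR, mul_sub, Finset.sum_sub_distrib]

lemma dotR_nonneg {ξ x : Fin n → ℝ} (hξ : ∀ i, 0 ≤ ξ i) (hx : ∀ i, 0 ≤ x i) :
    0 ≤ dotR ξ x :=
  Finset.sum_nonneg fun i _ => mul_nonneg (hξ i) (hx i)

lemma dotR_left_add (η ξ x : Fin n → ℝ) (t : ℝ) :
    dotR (η + t • ξ) x = dotR η x + t * dotR ξ x := by
  simp only [dotR, Pi.add_apply, Pi.smul_apply, smul_eq_mul, add_mul, Finset.sum_add_distrib,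
    Finset.mul_sum]
  congr 1
  exact Finset.sum_congr rfl fun i _ => by ring

lemma dotR_continuous (ξ : Fin n → ℝ) : Continuous (dotR ξ) := by
  unfold dotR
  exact continuous_finset_sum _ fun i _ => (continuous_const.mul (continuous_apply i))

lemma le_dot_of_hull {ζ : Fin n → ℝ} (hζ : ∀ i, 0 ≤ ζ i) (A : Set (Fin n → ℝ)) (m : ℝ)
    (h : ∀ v ∈ A, m ≤ dotR ζ v) :
    ∀ x ∈ convexHull ℝ (A + posOrthant n), m ≤ dotR ζ x := by
  intro x hx
  have hconv : Convex ℝ {x : Fin n → ℝ | m ≤ dotR ζ x} :=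
    convex_halfSpace_ge (dotR_isLinear ζ) m
  refine convexHull_min ?_ hconv hx
  rintro z ⟨v, hv, p, hp, rfl⟩
  have h1 : 0 ≤ dotR ζ p := dotR_nonneg hζ hp
  have h2 := h v hv
  simp only [Set.mem_setOf_eq, dotR_add]
  linarith

lemma hull_absorb (A : Set (Fin n → ℝ)) {x p : Fin n → ℝ}
    (hx : x ∈ convexHull ℝ (A + posOrthant n)) (hp : p ∈ posOrthant n) :
    x + p ∈ convexHull ℝ (A + posOrthant n) := by
  have hC : Convex ℝ {y : Fin n → ℝ | y + p ∈ convexHull ℝ (A + posOrthant n)} := by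
    intro u hu v hv α β hα hβ hs
    have key : (α • u + β • v) + p = α • (u + p) + β • (v + p) := by
      rw [smul_add, smul_add, add_add_add_comm, ← add_smul, hs, one_smul]
    simp only [Set.mem_setOf_eq, key]
    exact (convex_convexHull ℝ _) hu hv hα hβ hs
  refine convexHull_min ?_ hC hx
  rintro z ⟨v, hv, q, hq, rfl⟩
  have : v + q + p ∈ A + posOrthant n :=
    ⟨v, hv, q + p, fun i => add_nonneg (hq i) (hp i), (add_assoc _ _ _).symm⟩
  exact subset_convexHull ℝ _ this

lemma dickson (S : Set (Fin n → ℕ)) (hS : S.Nonempty) :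
    ∃ V : Finset (Fin n → ℕ), ↑V ⊆ S ∧ V.Nonempty ∧ ∀ s ∈ S, ∃ v ∈ V, v ≤ s := by
  set M : Set (Fin n → ℕ) := {s ∈ S | ∀ t ∈ S, t ≤ s → t = s} with hM
  have hanti : IsAntichain (· ≤ ·) M := fun x hx y hy hne hle => hne (hy.2 x hx.1 hle)
  have hMfin : M.Finite := hanti.finite_of_partiallyWellOrderedOn
    (Set.isPWO_of_wellQuasiOrderedLE M)
  have hdom : ∀ s ∈ S, ∃ m ∈ M, m ≤ s := by
    have key : ∀ k : ℕ, ∀ s ∈ S, (∑ i, s i) ≤ k → ∃ m ∈ M, m ≤ s := by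
      intro k
      induction k with
      | zero =>
        intro s hs hsum
        have h0 : ∀ i, s i = 0 := fun i => by
          have h1 : s i ≤ ∑ j, s j :=
            Finset.single_le_sum (fun j _ => Nat.zero_le (s j)) (Finset.mem_univ i)
          omega
        refine ⟨s, ⟨hs, fun t ht hts => funext fun i => ?_⟩, le_refl s⟩
        have h2 : t i ≤ s i := hts i
        rw [h0 i] at h2
        rw [h0 i]
        omega
      | succ k ih =>
        intro s hs hsum
        by_cases hsm : s ∈ M
        · exact ⟨s, hsm, le_refl s⟩
        · simp only [hM, Set.mem_sep_iff, not_and, not_forall] at hsm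
          obtain ⟨t, ht, hts, htne⟩ := hsm hs
          have hsumlt : (∑ i, t i) < ∑ i, s i := by
            have hne : ∃ i, t i < s i := by
              by_contra hno
              push_neg at hno
              exact htne (funext fun i => le_antisymm (hts i) (hno i))
            obtain ⟨i, hi⟩ := hne
            exact Finset.sum_lt_sum (fun j _ => hts j) ⟨i, Finset.mem_univ i, hi⟩
          obtain ⟨m, hm, hmt⟩ := ih t ht (by omega)
          exact ⟨m, hm, hmt.trans hts⟩
    intro s hs
    exact key (∑ i, s i) s hs le_rfl
  obtain ⟨s₀, hs₀⟩ := hS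
  obtain ⟨m₀, hm₀, _⟩ := hdom s₀ hs₀
  refine ⟨hMfin.toFinset, ?_, ⟨m₀, hMfin.mem_toFinset.2 hm₀⟩, ?_⟩
  · intro x hx
    exact (hMfin.mem_toFinset.1 hx).1
  · intro s hs
    obtain ⟨m, hm, hms⟩ := hdom s hs
    exact ⟨m, hMfin.mem_toFinset.2 hm, hms⟩

lemma convex_posOrthant (n : ℕ) : Convex ℝ (posOrthant n) := by
  intro x hx y hy α β hα hβ _
  intro i
  have h1 : 0 ≤ α * x i := mul_nonneg hα (hx i)
  have h2 : 0 ≤ β * y i := mul_nonneg hβ (hy i)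
  simpa using add_nonneg h1 h2

lemma dotR_single (η : Fin n → ℝ) (i : Fin n) : dotR η (Pi.single i (1:ℝ)) = η i := by
  classical
  simp [dotR, Pi.single_apply, mul_ite, Finset.sum_ite_eq']

end LooseAux

open LooseAux

/-- Lemma 1: For a loose edge `E` of a Newton polyhedron `Δ` with endpoints `a`, `b`,
any `c ∈ Δ` and any `ξ ≥ 0` with `⟨ξ,a⟩ = ⟨ξ,b⟩` satisfy `⟨ξ,c⟩ ≥ ⟨ξ,a⟩`. -/
theorem looseEdge_min {n : ℕ} (Δ E : Set (Fin n → ℝ)) (a b : Fin n → ℝ)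
    (hΔ : IsNewtonPolyhedron Δ) (hE : IsLooseEdge Δ E)
    (hab : a ≠ b) (hseg : E = segment ℝ a b) :
    ∀ c ∈ Δ, ∀ ξ : Fin n → ℝ, (∀ i, 0 ≤ ξ i) → dotR ξ a = dotR ξ b →
      dotR ξ a ≤ dotR ξ c := by
  classical
  obtain ⟨S, hSne, hΔS⟩ := hΔ
  obtain ⟨V, hVS, hVne, hVdom⟩ := LooseAux.dickson S hSne
  set ι : (Fin n → ℕ) → (Fin n → ℝ) := fun α i => (α i : ℝ) with hι
  set W : Finset (Fin n → ℝ) := V.image ι with hW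
  have hWne : W.Nonempty := hVne.image ι
  -- Δ is the hull of the finitely many generators W plus the orthant
  have hΔW : Δ = convexHull ℝ ((W : Set (Fin n → ℝ)) + posOrthant n) := by
    apply le_antisymm
    · rw [hΔS]
      apply convexHull_mono
      rintro x ⟨y, ⟨α, hα, rfl⟩, p, hp, rfl⟩
      obtain ⟨v, hvV, hvle⟩ := hVdom α hα
      refine ⟨ι v, Finset.mem_coe.2 (Finset.mem_image_of_mem ι hvV),
        (ι α - ι v) + p, fun i => ?_, ?_⟩
      · have h1 : (v i : ℝ) ≤ (α i : ℝ) := Nat.cast_le.2 (hvle i)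
        have h2 := hp i
        simp only [Pi.add_apply, Pi.sub_apply, hι]
        linarith
      · abel
    · rw [hΔS]
      apply convexHull_mono
      apply Set.add_subset_add_right
      rintro x hx
      rw [Finset.mem_coe, hW, Finset.mem_image] at hx
      obtain ⟨α, hαV, rfl⟩ := hx
      exact ⟨α, hVS hαV, rfl⟩
  have hWmemΔ : ∀ v ∈ W, v ∈ Δ := by
    intro v hv
    rw [hΔW]
    exact subset_convexHull ℝ _ ⟨v, Finset.mem_coe.2 hv, 0, fun i => le_rfl, add_zero v⟩
  have hconvΔ : Convex ℝ Δ := hΔS ▸ convex_convexHull ℝ _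
  intro c hc ξ hξ hξab
  by_contra hcon
  push_neg at hcon
  obtain ⟨⟨η, hη0, hEface⟩, hEcomp, _hEdim, hloose⟩ := hE
  have haE : a ∈ E := by rw [hseg]; exact left_mem_segment ℝ a b
  have hbE : b ∈ E := by rw [hseg]; exact right_mem_segment ℝ a b
  have haF : a ∈ faceOf Δ η := by rw [← hEface]; exact haE
  have hbF : b ∈ faceOf Δ η := by rw [← hEface]; exact hbE
  have haΔ : a ∈ Δ := haF.1
  have hbΔ : b ∈ Δ := hbF.1
  have hamin : ∀ y ∈ Δ, dotR η a ≤ dotR η y := haF.2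
  have hηab : dotR η a = dotR η b := le_antisymm (hamin b hbΔ) (hbF.2 a haΔ)
  set m₀ := dotR η a with hm₀
  set A := dotR ξ a with hA
  -- η is strictly positive, since E is compact
  have hηpos : ∀ i, 0 < η i := by
    intro i
    rcases (hη0 i).lt_or_eq with h | h
    · exact h
    · exfalso
      obtain ⟨R, hR⟩ := isBounded_iff_forall_norm_le.1 hEcomp.isBounded
      set s : ℝ := R + ‖a‖ + 1 with hs
      have hRa : ‖a‖ ≤ R := hR a haE
      have hs0 : 0 ≤ s := by have := norm_nonneg a; simp only [hs]; linarith
      set x : Fin n → ℝ := a + s • (Pi.single i 1 : Fin n → ℝ) with hx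
      have hpmem : s • (Pi.single i 1 : Fin n → ℝ) ∈ posOrthant n := by
        intro j
        simp only [Pi.smul_apply, smul_eq_mul, Pi.single_apply]
        split
        · simpa using hs0
        · simp
      have hxΔ : x ∈ Δ := by
        rw [hΔW] at haΔ ⊢
        exact hull_absorb _ haΔ hpmem
      have hxE : x ∈ E := by
        rw [hEface]
        refine ⟨hxΔ, fun y hy => ?_⟩
        have hxdot : dotR η x = m₀ := by
          rw [hx, dotR_add, dotR_smul, dotR_single, ← h, mul_zero, add_zero]
        rw [hxdot]
        exact hamin y hy
      have hnx := hR x hxE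
      have hxi : x i = a i + s := by simp [hx, Pi.single_apply]
      have h1 : |x i| ≤ ‖x‖ := by
        have := norm_le_pi_norm x i
        simpa [Real.norm_eq_abs] using this
      have h2 : |a i| ≤ ‖a‖ := by
        have := norm_le_pi_norm a i
        simpa [Real.norm_eq_abs] using this
      have h4 : -(a i) ≤ |a i| := neg_le_abs (a i)
      have h3 : a i + s ≤ R := hxi ▸ ((le_abs_self (x i)).trans (h1.trans hnx))
      linarith [hs, h2]
  -- the sweep set T
  have hηW : ∀ v ∈ W, m₀ ≤ dotR η v := fun v hv => hamin v (hWmemΔ v hv)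
  set T : Set ℝ :=
    Set.Ici (0:ℝ) ∩ ⋂ v ∈ W, {t : ℝ | m₀ + t * A ≤ dotR η v + t * dotR ξ v} with hT
  have hTmem : ∀ t : ℝ,
      t ∈ T ↔ 0 ≤ t ∧ ∀ v ∈ W, m₀ + t * A ≤ dotR η v + t * dotR ξ v := by
    intro t
    simp [hT, Set.mem_iInter]
  have h0T : (0:ℝ) ∈ T := by
    rw [hTmem]
    exact ⟨le_rfl, fun v hv => by simpa using hηW v hv⟩
  have hTclosed : IsClosed T := by
    refine isClosed_Ici.inter (isClosed_biInter fun v hv => ?_)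
    exact isClosed_le (by fun_prop) (by fun_prop)
  have hTbdd : BddAbove T := by
    obtain ⟨w, hwW, hwmin⟩ := W.exists_min_image (dotR ξ) hWne
    have hwc : dotR ξ w ≤ dotR ξ c := by
      refine le_dot_of_hull hξ (W : Set (Fin n → ℝ)) (dotR ξ w)
        (fun v hv => hwmin v (Finset.mem_coe.1 hv)) c ?_
      rw [← hΔW]; exact hc
    have hwA : dotR ξ w < A := lt_of_le_of_lt hwc hcon
    refine ⟨(dotR η w - m₀) / (A - dotR ξ w), fun t ht => ?_⟩
    rw [hTmem] at ht
    have h1 := ht.2 w hwW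
    rw [le_div_iff₀ (by linarith)]
    nlinarith
  set τ := sSup T with hτ
  have hτT : τ ∈ T := hTclosed.csSup_mem ⟨0, h0T⟩ hTbdd
  have hτ0 : 0 ≤ τ := ((hTmem τ).1 hτT).1
  have hτW : ∀ v ∈ W, m₀ + τ * A ≤ dotR η v + τ * dotR ξ v := ((hTmem τ).1 hτT).2
  set ζ : Fin n → ℝ := η + τ • ξ with hζ
  have hζpos : ∀ i, 0 < ζ i := by
    intro i
    have h1 := hηpos i
    have h2 := mul_nonneg hτ0 (hξ i)
    simp only [hζ, Pi.add_apply, Pi.smul_apply, smul_eq_mul]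
    linarith
  have hζ0 : ∀ i, 0 ≤ ζ i := fun i => (hζpos i).le
  have hζval : ∀ x, dotR ζ x = dotR η x + τ * dotR ξ x := fun x => dotR_left_add η ξ x τ
  have hζa : dotR ζ a = m₀ + τ * A := by rw [hζval]
  have hζb : dotR ζ b = m₀ + τ * A := by rw [hζval, ← hηab, ← hξab]
  have hminΔ : ∀ y ∈ Δ, m₀ + τ * A ≤ dotR ζ y := by
    intro y hy
    rw [hΔW] at hy
    exact le_dot_of_hull hζ0 _ _
      (fun v hv => by rw [hζval]; exact hτW v (Finset.mem_coe.1 hv)) y hy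
  set F := faceOf Δ ζ with hF
  have haF' : a ∈ F := ⟨haΔ, fun y hy => by rw [hζa]; exact hminΔ y hy⟩
  have hbF' : b ∈ F := ⟨hbΔ, fun y hy => by rw [hζb]; exact hminΔ y hy⟩
  -- there is a generator in F with strictly smaller ξ-value
  have hvex : ∃ v ∈ W, dotR ζ v = m₀ + τ * A ∧ dotR ξ v < A := by
    by_contra hno
    push_neg at hno
    set r : (Fin n → ℝ) → ℝ := fun v =>
      if dotR ξ v < A then (dotR ζ v - (m₀ + τ * A)) / (A - dotR ξ v) else 1 with hr
    have hrpos : ∀ v ∈ W, 0 < r v := by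
      intro v hv
      by_cases hvA : dotR ξ v < A
      · have hge : m₀ + τ * A ≤ dotR ζ v := by rw [hζval]; exact hτW v hv
        have hne : dotR ζ v ≠ m₀ + τ * A := by
          intro heq
          exact absurd (hno v hv heq) (not_le.2 hvA)
        simp only [hr, if_pos hvA]
        exact div_pos (by cases hge.lt_or_eq with
          | inl h => linarith
          | inr h => exact absurd h.symm hne) (by linarith)
      · simp only [hr, if_neg hvA]
        norm_num
    obtain ⟨v₀, hv₀W, hv₀min⟩ := W.exists_min_image r hWne
    set δ := r v₀ with hδdef
    have hδ : 0 < δ := hrpos v₀ hv₀W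
    have hδT : τ + δ ∈ T := by
      rw [hTmem]
      refine ⟨by linarith, fun v hvW => ?_⟩
      have hτv := hτW v hvW
      by_cases hvA : dotR ξ v < A
      · have hδv : δ ≤ r v := hv₀min v hvW
        rw [hr] at hδv
        simp only [if_pos hvA] at hδv
        have h5 : δ * (A - dotR ξ v) ≤ dotR ζ v - (m₀ + τ * A) :=
          (le_div_iff₀ (by linarith)).1 hδv
        rw [hζval] at h5
        nlinarith
      · push_neg at hvA
        nlinarith
    have hle := le_csSup hTbdd hδT
    rw [← hτ] at hle
    linarith
  obtain ⟨v, hvW, hvζ, hvξ⟩ := hvex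
  have hvΔ : v ∈ Δ := hWmemΔ v hvW
  have hvF : v ∈ F := ⟨hvΔ, fun y hy => by rw [hvζ]; exact hminΔ y hy⟩
  -- E ⊆ F
  have hEF : E ⊆ F := by
    rw [hseg]
    rintro z ⟨α, β, hα, hβ, hs, rfl⟩
    refine ⟨hconvΔ haΔ hbΔ hα hβ hs, fun y hy => ?_⟩
    have hzd : dotR ζ (α • a + β • b) = m₀ + τ * A := by
      rw [dotR_add, dotR_smul, dotR_smul, hζa, hζb, ← add_mul, hs, one_mul]
    rw [hzd]
    exact hminΔ y hy
  -- F is compact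
  set K := convexHull ℝ (W : Set (Fin n → ℝ)) with hK
  have hKcomp : IsCompact K := W.finite_toSet.isCompact_convexHull ℝ
  have hKΔ : K ⊆ Δ := by
    rw [hΔW]
    apply convexHull_mono
    intro w hw
    exact ⟨w, hw, 0, fun i => le_rfl, add_zero w⟩
  have hFK : F ⊆ K := by
    intro x hxF
    have hΔsub : Δ ⊆ K + posOrthant n := by
      rw [hΔW]
      refine convexHull_min (Set.add_subset_add_right (subset_convexHull ℝ _)) ?_
      exact (convex_convexHull ℝ _).add (convex_posOrthant n)
    obtain ⟨k, hk, p, hp, hkp0⟩ := hΔsub hxF.1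
    have hkp : k + p = x := hkp0
    have h1 : dotR ζ x ≤ m₀ + τ * A := by rw [← hζa]; exact hxF.2 a haΔ
    have h2 : m₀ + τ * A ≤ dotR ζ k := hminΔ k (hKΔ hk)
    have h3 : 0 ≤ dotR ζ p := dotR_nonneg hζ0 hp
    have h4 : dotR ζ p = 0 := by
      rw [← hkp, dotR_add] at h1
      linarith
    have h5 : p = 0 := by
      funext i
      have h6 := (Finset.sum_eq_zero_iff_of_nonneg
        (fun j (_ : j ∈ Finset.univ) => mul_nonneg (hζ0 j) (hp j))).1 h4 i (Finset.mem_univ i)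
      have h7 := hζpos i
      have h8 : p i = 0 := by
        rcases mul_eq_zero.1 h6 with h | h
        · exact absurd h (ne_of_gt h7)
        · exact h
      simpa using h8
    rw [← hkp, h5, add_zero]
    exact hk
  have hFeq : F = K ∩ {x | dotR ζ x ≤ m₀ + τ * A} := by
    ext x
    constructor
    · intro hx
      exact ⟨hFK hx, by rw [Set.mem_setOf_eq, ← hζa]; exact hx.2 a haΔ⟩
    · rintro ⟨hxK, hxle⟩
      exact ⟨hKΔ hxK, fun y hy => le_trans hxle (hminΔ y hy)⟩
  have hFcomp : IsCompact F := by
    rw [hFeq]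
    exact hKcomp.inter_right (isClosed_le (dotR_continuous ζ) continuous_const)
  -- F has dimension ≥ 2
  have h1 : b - a ∈ vectorSpan ℝ F := by
    have := vsub_mem_vectorSpan ℝ hbF' haF'
    simpa using this
  have h2 : v - a ∈ vectorSpan ℝ F := by
    have := vsub_mem_vectorSpan ℝ hvF haF'
    simpa using this
  have hLI : LinearIndependent ℝ ![b - a, v - a] := by
    rw [LinearIndependent.pair_iff]
    intro s t hst
    have happ : dotR ξ (s • (b - a) + t • (v - a)) = 0 := by
      rw [hst]
      simp [dotR]
    rw [dotR_add, dotR_smul, dotR_smul, dotR_sub, dotR_sub, ← hξab, ← hA] at happ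
    have ht0 : t = 0 := by
      have hne : dotR ξ v - A ≠ 0 := by
        intro h
        rw [sub_eq_zero] at h
        exact absurd h (ne_of_lt hvξ)
      have : t * (dotR ξ v - A) = 0 := by linarith
      rcases mul_eq_zero.1 this with h | h
      · exact h
      · exact absurd h hne
    subst ht0
    refine ⟨?_, rfl⟩
    rw [zero_smul, add_zero] at hst
    rcases smul_eq_zero.1 hst with h | h
    · exact h
    · exact absurd h (sub_ne_zero_of_ne (Ne.symm hab))
  have hdim2 : 2 ≤ faceDim F := by
    set u : Fin 2 → vectorSpan ℝ F := ![⟨b - a, h1⟩, ⟨v - a, h2⟩] with hu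
    have hcomp : ((vectorSpan ℝ F).subtype ∘ u) = ![b - a, v - a] := by
      funext i
      fin_cases i <;> rfl
    have hLI2 : LinearIndependent ℝ u :=
      LinearIndependent.of_comp (vectorSpan ℝ F).subtype (by rw [hcomp]; exact hLI)
    have hcard := hLI2.fintype_card_le_finrank
    simpa [faceDim] using hcard
  have hF1 : faceDim F ≤ 1 := hloose F ⟨ζ, hζ0, rfl⟩ hFcomp hEF
  omega
end
end

section
/- Let Δ ⊆ ℝ^n be a Newton polyhedron with a loose edge E having endpoints a = (a_1,…,a_n) and b = (b_1,…,b_n). If min(a_i, b_i) = 0 for every i = 1,…,n, then a and b are the only vertices of Δ. -/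
open scoped Pointwise

noncomputable section

variable {n : ℕ}

lemma dotR_add_right (ξ x y : Fin n → ℝ) : dotR ξ (x + y) = dotR ξ x + dotR ξ y := by
  simp [dotR, mul_add, Finset.sum_add_distrib]

lemma dotR_smul_right (ξ : Fin n → ℝ) (c : ℝ) (x : Fin n → ℝ) :
    dotR ξ (c • x) = c * dotR ξ x := by
  simp [dotR, Finset.mul_sum, mul_comm, mul_left_comm]

lemma isLinearMap_dotR (ξ : Fin n → ℝ) : IsLinearMap ℝ (dotR ξ) :=
  ⟨dotR_add_right ξ, fun c x => dotR_smul_right ξ c x⟩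

lemma dotR_add_left (ξ μ x : Fin n → ℝ) : dotR (ξ + μ) x = dotR ξ x + dotR μ x := by
  simp [dotR, add_mul, Finset.sum_add_distrib]

lemma dotR_smul_left (c : ℝ) (ξ x : Fin n → ℝ) : dotR (c • ξ) x = c * dotR ξ x := by
  simp [dotR, Finset.mul_sum, mul_comm, mul_left_comm]

lemma dotR_sub_right (ξ x y : Fin n → ℝ) : dotR ξ (x - y) = dotR ξ x - dotR ξ y := by
  simp [dotR, mul_sub, Finset.sum_sub_distrib]

lemma dotR_sum (ξ : Fin n → ℝ) {ι : Type*} (t : Finset ι) (f : ι → (Fin n → ℝ)) :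
    dotR ξ (∑ j ∈ t, f j) = ∑ j ∈ t, dotR ξ (f j) :=
  map_sum (isLinearMap_dotR ξ).mk' f t

lemma dotR_nonneg {ξ x : Fin n → ℝ} (hξ : ∀ i, 0 ≤ ξ i) (hx : ∀ i, 0 ≤ x i) :
    0 ≤ dotR ξ x :=
  Finset.sum_nonneg fun i _ => mul_nonneg (hξ i) (hx i)

lemma dotR_coord_le {ξ x : Fin n → ℝ} (hξ : ∀ i, 0 ≤ ξ i) (hx : ∀ i, 0 ≤ x i) (i : Fin n) :
    ξ i * x i ≤ dotR ξ x :=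
  Finset.single_le_sum (fun j _ => mul_nonneg (hξ j) (hx j)) (Finset.mem_univ i)

lemma dotR_eq_zero {ξ x : Fin n → ℝ} (hξ : ∀ i, 0 < ξ i) (hx : ∀ i, 0 ≤ x i)
    (h : dotR ξ x = 0) : x = 0 := by
  funext i
  have h1 : ξ i * x i ≤ 0 := h ▸ dotR_coord_le (fun j => (hξ j).le) hx i
  have := le_antisymm h1 (mul_nonneg (hξ i).le (hx i))
  have := mul_eq_zero.1 this
  simp only [Pi.zero_apply]
  rcases this with h' | h'
  · exact absurd h' (hξ i).ne'
  · exact h'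

lemma dotR_mono {ξ x y : Fin n → ℝ} (hξ : ∀ i, 0 ≤ ξ i) (hxy : ∀ i, x i ≤ y i) :
    dotR ξ x ≤ dotR ξ y :=
  Finset.sum_le_sum fun i _ => mul_le_mul_of_nonneg_left (hxy i) (hξ i)

lemma posOrthant_convex : Convex ℝ (posOrthant n) := by
  intro x hx y hy s t hs ht _
  intro i
  exact add_nonneg (mul_nonneg hs (hx i)) (mul_nonneg ht (hy i))

lemma posOrthant_add_self : posOrthant n + posOrthant n = posOrthant n := by
  apply Set.Subset.antisymm
  · rintro x ⟨y, hy, z, hz, rfl⟩ i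
    exact add_nonneg (hy i) (hz i)
  · intro x hx
    exact ⟨x, hx, 0, fun i => le_refl 0, add_zero x⟩

variable {T : Set (Fin n → ℝ)}

lemma newton_subset_orthant (hT : T ⊆ posOrthant n) :
    convexHull ℝ (T + posOrthant n) ⊆ posOrthant n := by
  apply convexHull_min _ posOrthant_convex
  rintro x ⟨y, hy, z, hz, rfl⟩ i
  exact add_nonneg (hT hy i) (hz i)

lemma newton_self_subset : T + posOrthant n ⊆ convexHull ℝ (T + posOrthant n) :=
  subset_convexHull ℝ _

lemma newton_T_subset : T ⊆ convexHull ℝ (T + posOrthant n) := by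
  intro x hx
  exact subset_convexHull ℝ _ ⟨x, hx, 0, fun i => le_refl 0, add_zero x⟩

lemma newton_add_mem {x c : Fin n → ℝ} (hx : x ∈ convexHull ℝ (T + posOrthant n))
    (hc : c ∈ posOrthant n) : x + c ∈ convexHull ℝ (T + posOrthant n) := by
  have h1 : x + c ∈ convexHull ℝ (T + posOrthant n) + convexHull ℝ (posOrthant n) := by
    exact Set.add_mem_add hx (by rwa [posOrthant_convex.convexHull_eq])
  rw [← convexHull_add] at h1
  rwa [add_assoc, posOrthant_add_self] at h1

lemma newton_lowerBound {ζ : Fin n → ℝ} (hζ : ∀ i, 0 ≤ ζ i) {r : ℝ}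
    (hr : ∀ x ∈ T, r ≤ dotR ζ x) :
    ∀ x ∈ convexHull ℝ (T + posOrthant n), r ≤ dotR ζ x := by
  intro x hx
  have : convexHull ℝ (T + posOrthant n) ⊆ {w | r ≤ dotR ζ w} := by
    apply convexHull_min _ (convex_halfSpace_ge (isLinearMap_dotR ζ) r)
    rintro y ⟨p, hp, q, hq, rfl⟩
    have : r ≤ dotR ζ p := hr p hp
    have h2 : 0 ≤ dotR ζ q := dotR_nonneg hζ hq
    rw [Set.mem_setOf_eq, dotR_add_right]
    linarith
  exact this hx

lemma faceOf_convex {Δ : Set (Fin n → ℝ)} (hΔ : Convex ℝ Δ) (ζ : Fin n → ℝ) :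
    Convex ℝ (faceOf Δ ζ) := by
  intro x hx y hy s t hs ht hst
  refine ⟨hΔ hx.1 hy.1 hs ht hst, fun z hz => ?_⟩
  have h1 := hx.2 z hz
  have h2 := hy.2 z hz
  calc dotR ζ (s • x + t • y) = s * dotR ζ x + t * dotR ζ y := by
        rw [dotR_add_right, dotR_smul_right, dotR_smul_right]
    _ ≤ s * dotR ζ z + t * dotR ζ z := by
        exact add_le_add (mul_le_mul_of_nonneg_left h1 hs) (mul_le_mul_of_nonneg_left h2 ht)
    _ = dotR ζ z := by rw [← add_mul, hst, one_mul]

lemma finite_boxLattice (S : Set (Fin n → ℕ)) {c : Fin n → ℝ} (hc : ∀ i, 0 < c i) (M : ℝ) :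
    {x : Fin n → ℝ | x ∈ (fun α : Fin n → ℕ => fun i => (α i : ℝ)) '' S ∧
      ∀ i, c i * x i ≤ M}.Finite := by
  have hfin : (Set.univ.pi fun i : Fin n => Set.Iic (Nat.floor (M / c i))).Finite :=
    Set.Finite.pi fun i => Set.finite_Iic _
  have himg : ((fun α : Fin n → ℕ => fun i => (α i : ℝ)) ''
      (Set.univ.pi fun i : Fin n => Set.Iic (Nat.floor (M / c i)))).Finite :=
    hfin.image _
  apply himg.subset
  rintro x ⟨⟨α, hα, rfl⟩, hbound⟩
  refine ⟨α, fun i _ => ?_, rfl⟩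
  have h1 : (α i : ℝ) ≤ M / c i := by
    rw [le_div_iff₀ (hc i)]
    have := hbound i
    linarith [hbound i]
  exact Nat.le_floor (by exact_mod_cast h1.trans (le_refl _))

lemma faceOf_newton_compact {S : Set (Fin n → ℕ)} {ζ : Fin n → ℝ} (hζ : ∀ i, 0 < ζ i)
    {a₀ : Fin n → ℝ}
    (ha₀ : a₀ ∈ faceOf (convexHull ℝ
      ((fun α : Fin n → ℕ => fun i => (α i : ℝ)) '' S + posOrthant n)) ζ) :
    IsCompact (faceOf (convexHull ℝ
      ((fun α : Fin n → ℕ => fun i => (α i : ℝ)) '' S + posOrthant n)) ζ) := by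
  set T : Set (Fin n → ℝ) := (fun α : Fin n → ℕ => fun i => (α i : ℝ)) '' S with hTdef
  set Δ : Set (Fin n → ℝ) := convexHull ℝ (T + posOrthant n) with hΔdef
  set m : ℝ := dotR ζ a₀ with hmdef
  set A : Set (Fin n → ℝ) := {x | x ∈ T ∧ dotR ζ x = m} with hAdef
  have hTsub : T ⊆ Δ := newton_T_subset
  have hmmin : ∀ y ∈ Δ, m ≤ dotR ζ y := ha₀.2
  have hfaceA : A ⊆ faceOf Δ ζ := by
    rintro x ⟨hxT, hxm⟩
    exact ⟨hTsub hxT, fun y hy => hxm ▸ hmmin y hy⟩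
  have heq : faceOf Δ ζ = convexHull ℝ A := by
    apply Set.Subset.antisymm
    · rintro x ⟨hxΔ, hxmin⟩
      have hxm : dotR ζ x = m := le_antisymm (hxmin a₀ ha₀.1) (hmmin x hxΔ)
      rw [hΔdef, convexHull_eq] at hxΔ
      obtain ⟨ι, t, w, z, hw0, hw1, hz, hcen⟩ := hxΔ
      have hzm : ∀ j ∈ t, m ≤ dotR ζ (z j) ∧
          (dotR ζ (z j) = m → z j ∈ A) := by
        intro j hj
        obtain ⟨p, hp, q, hq, hpq⟩ := hz j hj
        have hpm : m ≤ dotR ζ p := hmmin p (hTsub hp)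
        have hq0 : 0 ≤ dotR ζ q := dotR_nonneg (fun i => (hζ i).le) hq
        constructor
        · rw [← hpq, dotR_add_right]; linarith
        · intro hzjm
          have hpq' : p + q = z j := hpq
          have hsum2 : dotR ζ p + dotR ζ q = m := by
            rw [← dotR_add_right, hpq']; exact hzjm
          have hqz : dotR ζ q = 0 := by linarith
          have hq0' : q = 0 := dotR_eq_zero hζ hq hqz
          have hzp : z j = p := by rw [← hpq', hq0', add_zero]
          rw [hzp]
          exact ⟨hp, by linarith⟩
      have hsum : ∑ j ∈ t, w j * (dotR ζ (z j) - m) = 0 := by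
        have hxc : dotR ζ x = ∑ j ∈ t, w j * dotR ζ (z j) := by
          rw [← hcen, Finset.centerMass_eq_of_sum_1 t z hw1, dotR_sum]
          exact Finset.sum_congr rfl fun j _ => dotR_smul_right ζ (w j) (z j)
        have : ∑ j ∈ t, w j * (dotR ζ (z j) - m) =
            (∑ j ∈ t, w j * dotR ζ (z j)) - m * ∑ j ∈ t, w j := by
          rw [Finset.mul_sum, ← Finset.sum_sub_distrib]
          exact Finset.sum_congr rfl fun j _ => by ring
        rw [this, ← hxc, hxm, hw1, mul_one, sub_self]
      have hzero : ∀ j ∈ t, w j * (dotR ζ (z j) - m) = 0 :=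
        (Finset.sum_eq_zero_iff_of_nonneg (fun j hj =>
          mul_nonneg (hw0 j hj) (by linarith [(hzm j hj).1]))).1 hsum
      classical
      rw [← hcen, ← Finset.centerMass_filter_ne_zero z]
      apply Finset.centerMass_mem_convexHull
      · intro j hj; exact hw0 j (Finset.mem_filter.1 hj).1
      · rw [Finset.sum_filter_ne_zero, hw1]; norm_num
      · intro j hj
        rw [Finset.mem_filter] at hj
        have h0 := hzero j hj.1
        rcases mul_eq_zero.1 h0 with h | h
        · exact absurd h hj.2
        · exact (hzm j hj.1).2 (by linarith)
    · exact convexHull_min hfaceA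
        (faceOf_convex (convex_convexHull ℝ _) ζ)
  rw [heq]
  apply Set.Finite.isCompact_convexHull
  apply (finite_boxLattice S hζ m).subset
  rintro x ⟨hxT, hxm⟩
  refine ⟨hxT, fun i => ?_⟩
  have hx0 : ∀ i, 0 ≤ x i := by
    obtain ⟨α, _, rfl⟩ := hxT
    intro i; positivity
  calc ζ i * x i ≤ dotR ζ x := dotR_coord_le (fun j => (hζ j).le) hx0 i
    _ = m := hxm

lemma two_le_rank_vectorSpan {F : Set (Fin n → ℝ)} {a b c : Fin n → ℝ}
    (ha : a ∈ F) (hb : b ∈ F) (hc : c ∈ F) (hba : b - a ≠ 0)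
    (hline : ¬ ∃ s : ℝ, c = a + s • (b - a)) :
    2 ≤ Module.finrank ℝ (vectorSpan ℝ F) := by
  have hli : LinearIndependent ℝ ![b - a, c - a] := by
    rw [LinearIndependent.pair_iff]
    intro s t hst
    have ht : t = 0 := by
      by_contra ht
      apply hline
      refine ⟨-(s / t), ?_⟩
      have : c - a = (-(s / t)) • (b - a) := by
        field_simp
        have : t • (c - a) = -(s • (b - a)) := by
          rw [← add_eq_zero_iff_eq_neg.symm] at hst <;> linear_combination hst
        funext i
        have h1 := congrFun this i
        simp only [Pi.smul_apply, smul_eq_mul, Pi.neg_apply, Pi.sub_apply] at h1 ⊢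
        field_simp at h1 ⊢
        linarith
      rw [← this]; abel_nf
    subst ht
    simp only [zero_smul, add_zero, smul_eq_zero] at hst
    exact ⟨hst.resolve_right hba, rfl⟩
  have hspan : Submodule.span ℝ (Set.range ![b - a, c - a]) ≤ vectorSpan ℝ F := by
    rw [Submodule.span_le]
    intro x hx
    simp only [Matrix.range_cons, Matrix.range_empty, Set.union_empty,
      Set.union_singleton, Set.mem_insert_iff, Set.mem_singleton_iff] at hx
    rcases hx with h | h
    · rw [h, show c - a = c -ᵥ a from rfl]
      exact vsub_mem_vectorSpan ℝ hc ha
    · rw [h, show b - a = b -ᵥ a from rfl]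
      exact vsub_mem_vectorSpan ℝ hb ha
  calc (2 : ℕ) = Module.finrank ℝ (Submodule.span ℝ (Set.range ![b - a, c - a])) := by
        rw [finrank_span_eq_card hli]; simp
    _ ≤ Module.finrank ℝ (vectorSpan ℝ F) := Submodule.finrank_mono hspan

lemma dotR_single (r : ℝ) (i : Fin n) (x : Fin n → ℝ) :
    dotR (r • (Pi.single i 1 : Fin n → ℝ)) x = r * x i := by
  simp only [dotR, Pi.smul_apply, smul_eq_mul]
  rw [Finset.sum_eq_single i]
  · simp
  · intro j _ hj
    simp [Pi.single_apply, hj]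
  · simp

lemma dotR_single_right (ξ : Fin n → ℝ) (r : ℝ) (i : Fin n) :
    dotR ξ (r • (Pi.single i 1 : Fin n → ℝ)) = r * ξ i := by
  simp only [dotR, Pi.smul_apply, smul_eq_mul]
  rw [Finset.sum_eq_single i]
  · simp; ring
  · intro j _ hj
    simp [Pi.single_apply, hj]
  · simp

lemma cont_affine (A B : ℝ) : Continuous fun t : ℝ => (1 - t) * A + t * B :=
  ((continuous_const.sub continuous_id).mul continuous_const).add
    (continuous_id.mul continuous_const)

theorem aux_looseEdge {n : ℕ} (E : Set (Fin n → ℝ)) (a b v : Fin n → ℝ)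
    (S : Set (Fin n → ℕ))
    (hEface : IsFaceOf (convexHull ℝ
      ((fun α : Fin n → ℕ => fun i => (α i : ℝ)) '' S + posOrthant n)) E)
    (hloose : ∀ F, IsFaceOf (convexHull ℝ
        ((fun α : Fin n → ℕ => fun i => (α i : ℝ)) '' S + posOrthant n)) F →
      IsCompact F → E ⊆ F → faceDim F ≤ 1)
    (hab : a ≠ b) (hseg : E = segment ℝ a b)
    (hmin : ∀ i, min (a i) (b i) = 0)
    (η : Fin n → ℝ) (hη0 : ∀ i, 0 ≤ η i)
    (hvface : {v} = faceOf (convexHull ℝ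
      ((fun α : Fin n → ℕ => fun i => (α i : ℝ)) '' S + posOrthant n)) η)
    (hva : v ≠ a) (hηab : dotR η a ≤ dotR η b) : False := by
  classical
  set Tset : Set (Fin n → ℝ) := (fun α : Fin n → ℕ => fun i => (α i : ℝ)) '' S with hTdef
  set Δ : Set (Fin n → ℝ) := convexHull ℝ (Tset + posOrthant n) with hΔdef
  have hΔconv : Convex ℝ Δ := convex_convexHull ℝ _
  have hTorth : Tset ⊆ posOrthant n := by
    rintro x ⟨α, _, rfl⟩ i; positivity
  have hΔorth : ∀ x ∈ Δ, ∀ i, 0 ≤ x i := fun x hx => newton_subset_orthant hTorth hx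
  have hTsub : Tset ⊆ Δ := newton_T_subset
  -- endpoints of the edge
  obtain ⟨ξ, hξ0, hEeq⟩ := hEface
  have haface : a ∈ faceOf Δ ξ := hEeq ▸ (hseg ▸ left_mem_segment ℝ a b)
  have hbface : b ∈ faceOf Δ ξ := hEeq ▸ (hseg ▸ right_mem_segment ℝ a b)
  have haΔ : a ∈ Δ := haface.1
  have hbΔ : b ∈ Δ := hbface.1
  have hamin : ∀ x ∈ Δ, dotR ξ a ≤ dotR ξ x := haface.2
  have hξab : dotR ξ a = dotR ξ b := le_antisymm (hamin b hbΔ) (hbface.2 a haΔ)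
  have ha0 : ∀ i, 0 ≤ a i := by
    intro i
    have := hmin i
    rcases le_total (a i) (b i) with h | h
    · rw [min_eq_left h] at this; linarith
    · rw [min_eq_right h] at this; linarith
  -- the vertex
  have hvf : v ∈ faceOf Δ η := by rw [← hvface]; exact Set.mem_singleton v
  have hvΔ : v ∈ Δ := hvf.1
  have hvmin : ∀ x ∈ Δ, dotR η v ≤ dotR η x := hvf.2
  have hηv : dotR η v < dotR η a := by
    rcases lt_or_eq_of_le (hvmin a haΔ) with h | h
    · exact h
    · exfalso
      have : a ∈ faceOf Δ η := ⟨haΔ, fun y hy => h ▸ hvmin y hy⟩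
      rw [← hvface, Set.mem_singleton_iff] at this
      exact hva (this ▸ rfl)
  -- positivity of ξ
  have hξpos : ∀ i, 0 < ξ i := by
    intro i
    rcases (hξ0 i).lt_or_eq with h | h
    · exact h
    · exfalso
      set t₀ : ℝ := |a i| + |b i| + 1 with ht₀
      have ht₀pos : 0 < t₀ := by positivity
      set c : Fin n → ℝ := t₀ • (Pi.single i 1 : Fin n → ℝ) with hc
      have hcC : c ∈ posOrthant n := by
        intro j
        rcases eq_or_ne j i with rfl | hji
        · simp [hc]; positivity
        · simp [hc, Pi.single_apply, hji]
      have hpΔ : a + c ∈ Δ := newton_add_mem haΔ hcC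
      have hdotc : dotR ξ c = 0 := by rw [hc, dotR_single_right, ← h]; ring
      have hpface : a + c ∈ faceOf Δ ξ := by
        refine ⟨hpΔ, fun y hy => ?_⟩
        rw [dotR_add_right, hdotc, add_zero]
        exact hamin y hy
      rw [← hEeq, hseg, segment_eq_image] at hpface
      obtain ⟨θ, hθ, hθeq⟩ := hpface
      have hiq := congrFun hθeq i
      simp only [Pi.add_apply, Pi.smul_apply, smul_eq_mul] at hiq
      have hci : c i = t₀ := by simp [hc]
      rw [hci] at hiq
      -- (1-θ) * a i + θ * b i = a i + t₀
      have h1 : θ * (b i - a i) = t₀ := by linarith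
      have h2 : b i - a i ≤ |a i| + |b i| := by
        have := le_abs_self (b i); have := neg_abs_le (a i); linarith
      have h3 : θ * (b i - a i) ≤ |a i| + |b i| := by
        rcases le_total (b i - a i) 0 with h4 | h4
        · have : θ * (b i - a i) ≤ 0 := mul_nonpos_of_nonneg_of_nonpos hθ.1 h4
          have : (0:ℝ) ≤ |a i| + |b i| := by positivity
          linarith
        · calc θ * (b i - a i) ≤ 1 * (b i - a i) :=
              mul_le_mul_of_nonneg_right hθ.2 h4
            _ = b i - a i := one_mul _
            _ ≤ |a i| + |b i| := h2
      rw [h1] at h3; rw [ht₀] at h3; linarith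
  -- construct the rotated functional ζh
  have hζh : ∃ ζh : Fin n → ℝ, (∀ j, 0 ≤ ζh j) ∧ dotR ζh a = dotR ζh b ∧
      dotR ζh v < dotR ζh a := by
    by_cases hcase : ∃ i, 0 < a i ∧ v i ≤ a i
    · obtain ⟨i, hai, hvi⟩ := hcase
      have hbi : b i = 0 := by
        have := hmin i
        rcases le_total (a i) (b i) with h | h
        · rw [min_eq_left h] at this; linarith
        · rw [min_eq_right h] at this; exact this
      set c0 : ℝ := dotR η b - dotR η a with hc0
      have hc0nn : 0 ≤ c0 := by rw [hc0]; linarith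
      refine ⟨η + (c0 / a i) • (Pi.single i 1 : Fin n → ℝ), ?_, ?_, ?_⟩
      · intro j
        rcases eq_or_ne j i with rfl | hji
        · have : 0 ≤ c0 / a j := div_nonneg hc0nn hai.le
          simp only [Pi.add_apply, Pi.smul_apply, Pi.single_eq_same, smul_eq_mul, mul_one]
          linarith [hη0 j]
        · simp [Pi.single_apply, hji, hη0 j]
      · rw [dotR_add_left, dotR_add_left, dotR_single, dotR_single, hbi,
          div_mul_cancel₀ c0 hai.ne']
        rw [hc0]; ring
      · rw [dotR_add_left, dotR_add_left, dotR_single, dotR_single,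
          div_mul_cancel₀ c0 hai.ne']
        have : (c0 / a i) * v i ≤ c0 := by
          calc (c0 / a i) * v i ≤ (c0 / a i) * a i :=
              mul_le_mul_of_nonneg_left hvi (div_nonneg hc0nn hai.le)
            _ = c0 := div_mul_cancel₀ c0 hai.ne'
        rw [hc0]
        linarith [hηab]
    · exfalso
      push_neg at hcase
      have hva' : ∀ i, a i ≤ v i := by
        intro i
        rcases (ha0 i).lt_or_eq with h | h
        · exact (hcase i h).le
        · rw [← h]; exact hΔorth v hvΔ i
      have := dotR_mono hη0 hva'
      linarith
  obtain ⟨ζh, hζh0, hζhab, hζhv⟩ := hζh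
  -- the path of functionals
  set ζt : ℝ → (Fin n → ℝ) := fun t => (1 - t) • ξ + t • ζh with hζtdef
  have hdotform : ∀ (t : ℝ) (x : Fin n → ℝ),
      dotR (ζt t) x = (1 - t) * dotR ξ x + t * dotR ζh x := by
    intro t x
    rw [hζtdef]
    simp only
    rw [dotR_add_left, dotR_smul_left, dotR_smul_left]
  have hζtab : ∀ t, dotR (ζt t) a = dotR (ζt t) b := by
    intro t; rw [hdotform, hdotform, hξab, hζhab]
  set Tt : Set ℝ := {t | t ∈ Set.Icc (0:ℝ) 1 ∧
    ∀ x ∈ Tset, dotR (ζt t) a ≤ dotR (ζt t) x} with hTtdef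
  have h0Tt : (0:ℝ) ∈ Tt := by
    refine ⟨⟨le_refl 0, zero_le_one⟩, fun x hx => ?_⟩
    rw [hdotform, hdotform]
    simpa using hamin x (hTsub hx)
  have hTtbdd : BddAbove Tt := BddAbove.mono (fun t ht => ht.1) bddAbove_Icc
  have hTtclosed : IsClosed Tt := by
    have heq : Tt = Set.Icc (0:ℝ) 1 ∩
        ⋂ x ∈ Tset, {t : ℝ | (1 - t) * dotR ξ a + t * dotR ζh a ≤
          (1 - t) * dotR ξ x + t * dotR ζh x} := by
      ext t
      simp only [hTtdef, Set.mem_setOf_eq, Set.mem_inter_iff, Set.mem_iInter]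
      constructor
      · rintro ⟨h1, h2⟩
        exact ⟨h1, fun x hx => by rw [← hdotform, ← hdotform]; exact h2 x hx⟩
      · rintro ⟨h1, h2⟩
        exact ⟨h1, fun x hx => by rw [hdotform, hdotform]; exact h2 x hx⟩
    rw [heq]
    refine isClosed_Icc.inter (isClosed_biInter fun x _ => ?_)
    exact isClosed_le (cont_affine _ _) (cont_affine _ _)
  set ts : ℝ := sSup Tt with htsdef
  have htsTt : ts ∈ Tt := hTtclosed.csSup_mem ⟨0, h0Tt⟩ hTtbdd
  have htslower : ∀ t ∈ Tt, ∀ x ∈ Δ, dotR (ζt t) a ≤ dotR (ζt t) x := by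
    intro t ht x hx
    have hζt0 : ∀ j, 0 ≤ (ζt t) j := by
      intro j
      have h1t : 0 ≤ 1 - t := by linarith [ht.1.2]
      simp only [hζtdef, Pi.add_apply, Pi.smul_apply, smul_eq_mul]
      have := hξ0 j; have := hζh0 j; have := ht.1.1
      positivity
    exact newton_lowerBound hζt0 ht.2 x hx
  have hts1 : ts < 1 := by
    set P : ℝ := dotR ξ v - dotR ξ a with hP
    set Q : ℝ := dotR ζh v - dotR ζh a with hQ
    have hPnn : 0 ≤ P := by rw [hP]; linarith [hamin v hvΔ]
    have hQneg : Q < 0 := by rw [hQ]; linarith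
    have hbound : ∀ t ∈ Tt, t ≤ P / (P - Q) := by
      intro t ht
      have := htslower t ht v hvΔ
      rw [hdotform, hdotform] at this
      have h2 : t * (P - Q) ≤ P := by rw [hP, hQ]; nlinarith
      rw [le_div_iff₀ (by linarith : (0:ℝ) < P - Q)]
      exact h2
    have h3 : ts ≤ P / (P - Q) := csSup_le ⟨0, h0Tt⟩ hbound
    have h4 : P / (P - Q) < 1 := by
      rw [div_lt_one (by linarith : (0:ℝ) < P - Q)]; linarith
    linarith
  set δ : ℝ := (1 - ts) / 2 with hδdef
  have hδpos : 0 < δ := by rw [hδdef]; linarith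
  have hts0 : 0 ≤ ts := htsTt.1.1
  have htsδ1 : ts + δ ≤ 1 := by rw [hδdef]; linarith
  have hlowξ : ∀ t ∈ Set.Icc ts (ts + δ), ∀ j, δ * ξ j ≤ (ζt t) j := by
    rintro t ⟨ht1, ht2⟩ j
    have h1t : δ ≤ 1 - t := by rw [hδdef] at ht2 ⊢; linarith
    simp only [hζtdef, Pi.add_apply, Pi.smul_apply, smul_eq_mul]
    have h1 : δ * ξ j ≤ (1 - t) * ξ j := mul_le_mul_of_nonneg_right h1t (hξ0 j)
    have h2 : 0 ≤ t * ζh j := mul_nonneg (by linarith) (hζh0 j)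
    linarith
  set M : ℝ := dotR ξ a + dotR ζh a with hMdef
  have hMbound : ∀ t ∈ Set.Icc ts (ts + δ), dotR (ζt t) a ≤ M := by
    rintro t ⟨ht1, ht2⟩
    rw [hdotform, hMdef]
    have hA : 0 ≤ dotR ξ a := dotR_nonneg hξ0 ha0
    have hB : 0 ≤ dotR ζh a := dotR_nonneg hζh0 ha0
    have ht01 : 0 ≤ t := le_trans hts0 ht1
    have ht11 : t ≤ 1 := le_trans ht2 htsδ1
    nlinarith
  set Bx : Set (Fin n → ℝ) := {x | x ∈ Tset ∧ ∀ j, (δ * ξ j) * x j ≤ M} with hBxdef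
  have hBxfin : Bx.Finite := finite_boxLattice S (fun j => mul_pos hδpos (hξpos j)) M
  have houtside : ∀ x ∈ Tset, x ∉ Bx → ∀ t ∈ Set.Icc ts (ts + δ),
      dotR (ζt t) a < dotR (ζt t) x := by
    intro x hx hxB t ht
    have hx0 : ∀ j, 0 ≤ x j := hTorth hx
    simp only [hBxdef, Set.mem_setOf_eq, not_and, not_forall] at hxB
    obtain ⟨j, hj⟩ := hxB hx
    push_neg at hj
    have h1 : (δ * ξ j) * x j ≤ (ζt t) j * x j :=
      mul_le_mul_of_nonneg_right (hlowξ t ht j) (hx0 j)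
    have hζt0 : ∀ k, 0 ≤ (ζt t) k := fun k =>
      le_trans (mul_nonneg hδpos.le (hξ0 k)) (hlowξ t ht k)
    have h2 : (ζt t) j * x j ≤ dotR (ζt t) x := dotR_coord_le hζt0 hx0 j
    have h3 := hMbound t ht
    linarith
  set L : Set (Fin n → ℝ) := {x | ∃ s : ℝ, x = a + s • (b - a)} with hLdef
  have honline : ∀ x ∈ L, ∀ t, dotR (ζt t) x = dotR (ζt t) a := by
    rintro x ⟨s, rfl⟩ t
    rw [dotR_add_right, dotR_smul_right, dotR_sub_right, ← hζtab t]
    ring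
  -- main claim: at time ts the face picks up a point off the line
  have hmain : ∃ x₀, x₀ ∈ Tset ∧ x₀ ∉ L ∧ dotR (ζt ts) x₀ ≤ dotR (ζt ts) a := by
    by_contra hcon
    push_neg at hcon
    set B' : Finset (Fin n → ℝ) := hBxfin.toFinset.filter (fun x => x ∉ L) with hB'def
    have hB'strict : ∀ x ∈ B', dotR (ζt ts) a < dotR (ζt ts) x := by
      intro x hx
      rw [hB'def, Finset.mem_filter, Set.Finite.mem_toFinset] at hx
      exact hcon x hx.1.1 hx.2
    have hev : ∀ᶠ t in nhds ts, ∀ x ∈ B', dotR (ζt t) a < dotR (ζt t) x := by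
      rw [Filter.eventually_all_finset]
      intro x hx
      have hcont : Continuous fun t : ℝ =>
          ((1 - t) * dotR ξ x + t * dotR ζh x) - ((1 - t) * dotR ξ a + t * dotR ζh a) :=
        (cont_affine _ _).sub (cont_affine _ _)
      have hpos : (0:ℝ) < ((1 - ts) * dotR ξ x + ts * dotR ζh x) -
          ((1 - ts) * dotR ξ a + ts * dotR ζh a) := by
        have := hB'strict x hx
        rw [hdotform, hdotform] at this
        linarith
      have := (hcont.tendsto ts).eventually (eventually_gt_nhds hpos)
      filter_upwards [this] with t ht
      rw [hdotform, hdotform]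
      linarith [ht]
    have hev2 : ∀ᶠ t in nhdsWithin ts (Set.Ioi ts),
        (∀ x ∈ B', dotR (ζt t) a < dotR (ζt t) x) ∧ t ∈ Set.Ioc ts (ts + δ) := by
      refine Filter.Eventually.and (hev.filter_mono nhdsWithin_le_nhds) ?_
      exact Filter.eventually_of_mem
        (Ioc_mem_nhdsGT_of_mem ⟨le_refl ts, by linarith⟩) (fun t ht => ht)
    obtain ⟨t', ht'B, ht'mem⟩ := hev2.exists
    have ht'Tt : t' ∈ Tt := by
      refine ⟨⟨le_trans hts0 ht'mem.1.le, le_trans ht'mem.2 htsδ1⟩, fun x hx => ?_⟩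
      by_cases hxL : x ∈ L
      · rw [honline x hxL t']
      · by_cases hxB : x ∈ Bx
        · refine (ht'B x ?_).le
          rw [hB'def, Finset.mem_filter, Set.Finite.mem_toFinset]
          exact ⟨hxB, hxL⟩
        · exact (houtside x hx hxB t' ⟨ht'mem.1.le, ht'mem.2⟩).le
    have : t' ≤ ts := le_csSup hTtbdd ht'Tt
    linarith [ht'mem.1]
  obtain ⟨x₀, hx₀T, hx₀L, hx₀le⟩ := hmain
  -- the face at time ts
  set ζs : Fin n → ℝ := ζt ts with hζsdef
  have hζspos : ∀ j, 0 < ζs j := fun j =>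
    lt_of_lt_of_le (mul_pos hδpos (hξpos j)) (hlowξ ts ⟨le_refl ts, by linarith⟩ j)
  set F : Set (Fin n → ℝ) := faceOf Δ ζs with hFdef
  have haF : a ∈ F := ⟨haΔ, htslower ts htsTt⟩
  have hbF : b ∈ F := by
    refine ⟨hbΔ, fun y hy => ?_⟩
    rw [← hζtab ts]
    exact htslower ts htsTt y hy
  have hx₀F : x₀ ∈ F :=
    ⟨hTsub hx₀T, fun y hy => le_trans hx₀le (htslower ts htsTt y hy)⟩
  have hEF : E ⊆ F := by
    rw [hseg]
    exact (faceOf_convex hΔconv ζs).segment_subset haF hbF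
  have hFcomp : IsCompact F := faceOf_newton_compact hζspos haF
  have hdim : 2 ≤ faceDim F := by
    unfold faceDim
    refine two_le_rank_vectorSpan haF hbF hx₀F ?_ ?_
    · exact sub_ne_zero_of_ne (Ne.symm hab)
    · exact hx₀L
  have := hloose F ⟨ζs, fun j => (hζspos j).le, rfl⟩ hFcomp hEF
  omega

/-- Lemma 2: if a loose edge has endpoints `a`, `b` with `min (a i) (b i) = 0` for all `i`,
then `a` and `b` are the only vertices of `Δ`. -/
theorem looseEdge_two_vertices {n : ℕ} (Δ E : Set (Fin n → ℝ)) (a b : Fin n → ℝ)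
    (hΔ : IsNewtonPolyhedron Δ) (hE : IsLooseEdge Δ E)
    (hab : a ≠ b) (hseg : E = segment ℝ a b)
    (hmin : ∀ i, min (a i) (b i) = 0) :
    ∀ v : Fin n → ℝ, IsVertexOf Δ v → v = a ∨ v = b := by
  intro v hv
  by_contra hcon
  push_neg at hcon
  obtain ⟨hva, hvb⟩ := hcon
  obtain ⟨S, hSne, hΔeq⟩ := hΔ
  subst hΔeq
  obtain ⟨hEface, hEcomp, hEdim, hloose⟩ := hE
  obtain ⟨η, hη0, hvface⟩ := hv
  rcases le_total (dotR η a) (dotR η b) with h | h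
  · exact aux_looseEdge E a b v S hEface hloose hab hseg hmin η hη0 hvface hva h
  · exact aux_looseEdge E b a v S hEface hloose hab.symm
      (hseg.trans (segment_symm ℝ a b)) (fun i => (min_comm (b i) (a i)) ▸ hmin i)
      η hη0 hvface hvb h
end
end

section
/- Let c ∈ ℤ^n have at least one positive and at least one negative coordinate. Then there exists a basis ξ_1,…,ξ_n of the real vector space ℝ^n such that ξ_i ∈ ℕ^n for all i = 1,…,n and ⟨ξ_i, c⟩ = 0 for i = 1,…,n−1. -/
noncomputable section

/-- Lemma 3: for `c ∈ ℤ^n` with at least one positive and one negative coordinate,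
there is a basis `ξ_1, …, ξ_n` of `ℝ^n` consisting of vectors with nonnegative integer
entries such that the first `n-1` of them are orthogonal to `c`. -/
theorem exists_nonneg_basis_orthogonal {n : ℕ} (c : Fin n → ℤ)
    (hpos : ∃ i, 0 < c i) (hneg : ∃ i, c i < 0) :
    ∃ ξ : Fin n → (Fin n → ℕ),
      LinearIndependent ℝ (fun i : Fin n => fun k : Fin n => (ξ i k : ℝ)) ∧
      ∀ i : Fin n, (i : ℕ) + 1 < n → ∑ k, (ξ i k : ℤ) * c k = 0 := by
  obtain ⟨p, hp⟩ := hpos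
  obtain ⟨q, hq⟩ := hneg
  cases n with
  | zero => exact Fin.elim0 p
  | succ m =>
    set l : Fin (m+1) := Fin.last m with hl
    set σ : Equiv.Perm (Fin (m+1)) := Equiv.swap p l with hσ
    have hpq : p ≠ q := fun h => absurd (h ▸ hp) (not_lt.2 hq.le)
    set ξ : Fin (m+1) → Fin (m+1) → ℕ := fun i k =>
      if i = l then (if k = p then 1 else 0)
      else if 0 ≤ c (σ i) then
        (if k = σ i then (-c q).toNat else 0) + (if k = q then (c (σ i)).toNat else 0)
      else
        (if k = σ i then (c p).toNat else 0) + (if k = p then (-c (σ i)).toNat else 0)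
      with hξ
    have castnat : ∀ a : ℤ, 0 ≤ a → ((a.toNat : ℕ) : ℝ) = (a : ℝ) := fun a ha => by
      exact_mod_cast congrArg (fun z : ℤ => (z : ℝ)) (Int.toNat_of_nonneg ha)
    refine ⟨ξ, ?_, ?_⟩
    · -- linear independence
      set V : Fin (m+1) → Fin (m+1) → ℝ := fun i k => (ξ i k : ℝ) with hV
      have key : ∀ j : Fin (m+1), j ≠ p →
          V (σ j) = fun k =>
            if 0 ≤ c j then
              (if k = j then (-(c q) : ℝ) else 0) + (if k = q then ((c j : ℝ)) else 0)
            else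
              (if k = j then ((c p : ℝ)) else 0) + (if k = p then (-(c j) : ℝ) else 0) := by
        intro j hj
        have h1 : σ (σ j) = j := Equiv.swap_apply_self _ _ _
        have h2 : σ j ≠ l := by
          intro h
          apply hj
          have := congrArg σ h
          rw [h1] at this
          simpa [hσ] using this
        funext k
        simp only [hV, hξ, if_neg h2, h1]
        split
        · next h3 =>
          push_cast
          simp only [castnat _ h3, castnat _ (neg_nonneg.2 hq.le), Int.cast_neg]
        · next h3 =>
          push_cast
          simp only [castnat _ (neg_nonneg.2 (not_le.1 h3).le), castnat _ hp.le, Int.cast_neg]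
      set S : Submodule ℝ (Fin (m+1) → ℝ) := Submodule.span ℝ (Set.range V) with hS
      have hVmem : ∀ i, V i ∈ S := fun i => Submodule.subset_span ⟨i, rfl⟩
      have hep : (fun k => if k = p then (1:ℝ) else 0) ∈ S := by
        have : V l = fun k => if k = p then (1:ℝ) else 0 := by
          funext k; simp [hV, hξ]
        exact this ▸ hVmem l
      have hneg' : ∀ j, c j < 0 → (fun k => if k = j then (1:ℝ) else 0) ∈ S := by
        intro j hj
        have hjp : j ≠ p := fun h => absurd (h ▸ hj) (not_lt.2 hp.le)
        have hkey := key j hjp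
        simp only [if_neg (not_le.2 hj)] at hkey
        have hcp : (c p : ℝ) ≠ 0 := by exact_mod_cast hp.ne'
        have : (fun k => if k = j then (1:ℝ) else 0)
            = (c p : ℝ)⁻¹ • V (σ j) - ((c p : ℝ)⁻¹ * (-(c j) : ℝ)) • (fun k => if k = p then (1:ℝ) else 0) := by
          funext k
          simp only [hkey, Pi.sub_apply, Pi.smul_apply, smul_eq_mul]
          by_cases h1 : k = j <;> by_cases h2 : k = p <;>
            simp [h1, h2, hjp, Ne.symm (hjp : j ≠ p)] <;> field_simp
        rw [this]
        exact S.sub_mem (S.smul_mem _ (hVmem _)) (S.smul_mem _ hep)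
      have heq : (fun k => if k = q then (1:ℝ) else 0) ∈ S := hneg' q hq
      have hall : ∀ j, (fun k => if k = j then (1:ℝ) else 0) ∈ S := by
        intro j
        by_cases hjp : j = p
        · exact hjp ▸ hep
        by_cases hjn : c j < 0
        · exact hneg' j hjn
        have hj0 : 0 ≤ c j := not_lt.1 hjn
        have hjq : j ≠ q := fun h => absurd (h ▸ hq) hjn
        have hkey := key j hjp
        simp only [if_pos hj0] at hkey
        have hcq : (-(c q) : ℝ) ≠ 0 := by
          have : (c q : ℝ) < 0 := by exact_mod_cast hq
          linarith
        have : (fun k => if k = j then (1:ℝ) else 0)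
            = (-(c q) : ℝ)⁻¹ • V (σ j) - ((-(c q) : ℝ)⁻¹ * ((c j) : ℝ)) • (fun k => if k = q then (1:ℝ) else 0) := by
          funext k
          simp only [hkey, Pi.sub_apply, Pi.smul_apply, smul_eq_mul]
          by_cases h1 : k = j <;> by_cases h2 : k = q <;>
            simp [h1, h2, hjq, Ne.symm (hjq : j ≠ q)] <;> field_simp <;> rw [div_self (neg_ne_zero.mp hcq)]
        rw [this]
        exact S.sub_mem (S.smul_mem _ (hVmem _)) (S.smul_mem _ heq)
      have hspan : ⊤ ≤ S := by
        rw [← (Pi.basisFun ℝ (Fin (m+1))).span_eq, Submodule.span_le]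
        rintro x ⟨j, rfl⟩
        have : (Pi.basisFun ℝ (Fin (m+1))) j = fun k => if k = j then (1:ℝ) else 0 := by
          funext k
          simp [Pi.basisFun_apply, Pi.single_apply]
        rw [this]
        exact hall j
      exact linearIndependent_of_top_le_span_of_card_eq_finrank hspan
        (by simp [Module.finrank_fin_fun])
    · -- orthogonality
      intro i hi
      have hil : i ≠ l := by
        intro h
        rw [h, hl] at hi
        simp at hi
      have hσp : σ i ≠ p := by
        intro h
        apply hil
        have : σ (σ i) = σ p := congrArg σ h
        rw [Equiv.swap_apply_self] at this
        simpa [hσ] using this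
      simp only [hξ, if_neg hil]
      split
      · next h3 =>
        have hjq : σ i ≠ q := by
          intro h; rw [h] at h3; exact absurd hq (not_lt.2 h3)
        push_cast [Int.toNat_of_nonneg h3, Int.toNat_of_nonneg (neg_nonneg.2 hq.le),
          apply_ite (fun x : ℤ => (x : ℝ))]
        rw [Finset.sum_congr rfl (fun k _ => add_mul _ _ _), Finset.sum_add_distrib]
        simp [Finset.sum_ite_eq', hjq]
        ring
      · next h3 =>
        push_cast [Int.toNat_of_nonneg (neg_nonneg.2 (not_le.1 h3).le), Int.toNat_of_nonneg hp.le,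
          apply_ite (fun x : ℤ => (x : ℝ))]
        rw [Finset.sum_congr rfl (fun k _ => add_mul _ _ _), Finset.sum_add_distrib]
        simp [Finset.sum_ite_eq', hσp]
        ring
end
end

section
/- With notation as in the weight grading: let E be a loose edge of a Newton polyhedron with primitive direction vector c, ξ_1,…,ξ_{n−1} ∈ ℕ^n linearly independent vectors orthogonal to E, R_v the span of monomials of weight v, and M ⊆ ℕ^{n−1} the set of weights z for which there exists α ∈ ℤ^n with ω(x^α) = z and ⟨ξ,α⟩ ≥ 0 for all ξ ∈ ℝ_{≥0}^n orthogonal to E. If w ∈ ℕ^{n−1} is such that R_w contains two coprime monomials, and z ∈ M, then dim R_{w+z} = dim R_w + dim R_z − 1. -/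
noncomputable section

open MvPolynomial

/-- The weight of a monomial exponent `α`, with respect to the vectors `ξ_1, …, ξ_n`. -/
def weightOf {n : ℕ} (ξ : Fin n → Fin (n+1) → ℕ) (α : Fin (n+1) →₀ ℕ) : Fin n → ℕ :=
  fun j => ∑ i, ξ j i * α i

/-- The graded piece `R_w` : the span of monomials of weight `w` in `K[x_1, …, x_{n+1}]`. -/
def Rw (K : Type*) [Field K] {n : ℕ} (ξ : Fin n → Fin (n+1) → ℕ) (w : Fin n → ℕ) :
    Submodule K (MvPolynomial (Fin (n+1)) K) :=
  Submodule.span K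
    {p | ∃ α : Fin (n+1) →₀ ℕ, weightOf ξ α = w ∧ p = MvPolynomial.monomial α (1 : K)}

/-- The monoid `M` of weights `z` admitting `α ∈ ℤ^{n+1}` with `ω(x^α) = z` and
`⟨η, α⟩ ≥ 0` for all `η ∈ ℝ_{≥0}^{n+1}` orthogonal to the edge direction `c`. -/
def weightSet {n : ℕ} (c : Fin (n+1) → ℤ) (ξ : Fin n → Fin (n+1) → ℕ) :
    Set (Fin n → ℕ) :=
  {z | ∃ α : Fin (n+1) → ℤ,
      (∀ j, ∑ i, (ξ j i : ℤ) * α i = (z j : ℤ)) ∧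
      ∀ η : Fin (n+1) → ℝ, (∀ i, 0 ≤ η i) → (∑ i, η i * (c i : ℝ)) = 0 →
        0 ≤ ∑ i, η i * (α i : ℝ)}

/-- The standing hypotheses on the primitive direction `c` of a loose edge and the
linearly independent weight vectors `ξ_1, …, ξ_n ∈ ℕ^{n+1}` orthogonal to it. -/
def GradingHyp {n : ℕ} (c : Fin (n+1) → ℤ) (ξ : Fin n → Fin (n+1) → ℕ) : Prop :=
  (∃ i, 0 < c i) ∧ (∃ i, c i < 0) ∧ Finset.univ.gcd c = 1 ∧
  LinearIndependent ℝ (fun j : Fin n => fun i : Fin (n+1) => (ξ j i : ℝ)) ∧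
  ∀ j, ∑ i, (ξ j i : ℤ) * c i = 0

/-- `G·R_w`, the image of `R_w` under multiplication by the polynomial `G`. -/
def mulRw {K : Type*} [Field K] {n : ℕ} (G : MvPolynomial (Fin (n+1)) K)
    (R : Submodule K (MvPolynomial (Fin (n+1)) K)) :
    Submodule K (MvPolynomial (Fin (n+1)) K) :=
  R.map (LinearMap.mulLeft K G)

/-! ### Auxiliary lemmas -/

open Matrix in
lemma ker_real_aux {n : ℕ} (c : Fin (n+1) → ℤ) (ξ : Fin n → Fin (n+1) → ℕ)
    (hli : LinearIndependent ℝ (fun j : Fin n => fun i : Fin (n+1) => (ξ j i : ℝ)))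
    (hc0 : c ≠ 0)
    (hcort : ∀ j, ∑ i, (ξ j i : ℤ) * c i = 0)
    (d : Fin (n+1) → ℤ) (hd : ∀ j, ∑ i, (ξ j i : ℤ) * d i = 0) :
    ∃ t : ℝ, ∀ i, (d i : ℝ) = t * (c i : ℝ) := by
  classical
  set M : Matrix (Fin n) (Fin (n+1)) ℝ := Matrix.of (fun j i => (ξ j i : ℝ)) with hM
  have hrows : LinearIndependent ℝ (fun j => M j) := hli
  have hinj : Function.Injective M.vecMul := Matrix.vecMul_injective_iff.2 hrows
  have hrankT : Mᵀ.rank = n := by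
    have : Function.Injective Mᵀ.mulVecLin := by
      intro x y hxy
      apply hinj
      simpa [Matrix.vecMul_transpose] using hxy
    rw [Matrix.rank]
    rw [LinearMap.finrank_range_of_inj this]
    simp [Module.finrank_pi]
  have hrank : M.rank = n := by rw [← Matrix.rank_transpose]; exact hrankT
  have hkerrange := LinearMap.finrank_range_add_finrank_ker M.mulVecLin
  rw [show Module.finrank ℝ (LinearMap.range M.mulVecLin) = M.rank from rfl] at hkerrange
  rw [hrank, Module.finrank_pi] at hkerrange
  simp only [Fintype.card_fin] at hkerrange
  have hkerdim : Module.finrank ℝ (LinearMap.ker M.mulVecLin) = 1 := by omega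
  set cr : Fin (n+1) → ℝ := fun i => (c i : ℝ) with hcr
  have hcr0 : cr ≠ 0 := by
    intro h
    apply hc0
    funext i
    have := congrFun h i
    simpa [hcr] using this
  have hwker : ∀ e : Fin (n+1) → ℤ, (∀ j, ∑ i, (ξ j i : ℤ) * e i = 0) →
      (fun i => (e i : ℝ)) ∈ LinearMap.ker M.mulVecLin := by
    intro e he
    simp only [LinearMap.mem_ker]
    funext j
    have h1 : ((∑ i, (ξ j i : ℤ) * e i : ℤ) : ℝ) = 0 := by rw [he j]; simp
    push_cast at h1
    simpa [Matrix.mulVecLin, Matrix.mulVec, dotProduct, hM] using h1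
  have hcker : cr ∈ LinearMap.ker M.mulVecLin := hwker c hcort
  have hspan : (ℝ ∙ cr) ≤ LinearMap.ker M.mulVecLin := by
    rwa [Submodule.span_singleton_le_iff_mem]
  have hspaneq : (ℝ ∙ cr) = LinearMap.ker M.mulVecLin := by
    apply Submodule.eq_of_le_of_finrank_le hspan
    rw [hkerdim, finrank_span_singleton hcr0]
  have hdker := hwker d hd
  rw [← hspaneq, Submodule.mem_span_singleton] at hdker
  obtain ⟨t, ht⟩ := hdker
  exact ⟨t, fun i => by have := congrFun ht i; simpa [hcr, mul_comm] using this.symm⟩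

lemma ker_int_aux {n : ℕ} (c : Fin (n+1) → ℤ) (i0 : Fin (n+1)) (hc0 : c i0 ≠ 0)
    (hgcd : Finset.univ.gcd c = 1)
    (d : Fin (n+1) → ℤ) (t : ℝ) (ht : ∀ i, (d i : ℝ) = t * (c i : ℝ)) :
    ∃ k : ℤ, ∀ i, d i = k * c i := by
  have hcross : ∀ i, c i0 * d i = c i * d i0 := by
    intro i
    have : ((c i0 * d i : ℤ) : ℝ) = ((c i * d i0 : ℤ) : ℝ) := by
      push_cast
      rw [ht i, ht i0]; ring
    exact_mod_cast this
  have hdvd : c i0 ∣ d i0 := by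
    have h1 : c i0 ∣ Finset.univ.gcd (fun i => d i0 * c i) := by
      apply Finset.dvd_gcd
      intro i _
      exact ⟨d i, by rw [hcross i]; ring⟩
    rw [Finset.gcd_mul_left, hgcd, mul_one] at h1
    exact dvd_normalize_iff.1 h1
  obtain ⟨k, hk⟩ := hdvd
  refine ⟨k, fun i => ?_⟩
  have := hcross i
  rw [hk] at this
  have h2 : c i0 * d i = c i0 * (k * c i) := by rw [this]; ring
  exact mul_left_cancel₀ hc0 h2

lemma finrank_Rw_eq_ncard (K : Type*) [Field K] {n : ℕ} (ξ : Fin n → Fin (n+1) → ℕ)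
    (v : Fin n → ℕ) (hfin : {α : Fin (n+1) →₀ ℕ | weightOf ξ α = v}.Finite) :
    Module.finrank K (Rw K ξ v) = {α : Fin (n+1) →₀ ℕ | weightOf ξ α = v}.ncard := by
  classical
  set S := {α : Fin (n+1) →₀ ℕ | weightOf ξ α = v} with hS
  have himset : {p : MvPolynomial (Fin (n+1)) K |
      ∃ α : Fin (n+1) →₀ ℕ, weightOf ξ α = v ∧ p = MvPolynomial.monomial α (1:K)}
      = (fun α => MvPolynomial.monomial α (1:K)) '' S := by
    ext p
    simp only [Set.mem_setOf_eq, Set.mem_image, hS]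
    exact ⟨fun ⟨a, h1, h2⟩ => ⟨a, h1, h2.symm⟩, fun ⟨a, h1, h2⟩ => ⟨a, h1, h2.symm⟩⟩
  have hfinim : ((fun α => MvPolynomial.monomial α (1:K)) '' S).Finite := hfin.image _
  haveI := hfinim.fintype
  have hli : LinearIndependent K
      ((↑) : ((fun α => MvPolynomial.monomial α (1:K)) '' S) → MvPolynomial (Fin (n+1)) K) := by
    have hb := (MvPolynomial.basisMonomials (Fin (n+1)) K).linearIndependent
    rw [MvPolynomial.coe_basisMonomials] at hb
    have hr := hb.linearIndepOn_id
    exact hr.mono (Set.image_subset_range _ _)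
  have hfr := finrank_span_set_eq_card (s := (fun α => MvPolynomial.monomial α (1:K)) '' S) hli
  rw [Rw, himset, hfr, ← Set.ncard_eq_toFinset_card']
  rw [Set.ncard_image_of_injective _ ?_]
  intro a b hab
  have := congrArg (fun p => MvPolynomial.coeff a p) hab
  simp only [MvPolynomial.coeff_monomial] at this
  by_contra hne
  rw [if_pos trivial, if_neg (Ne.symm hne)] at this
  exact one_ne_zero this

lemma fib_equiv {n : ℕ} (c : Fin (n+1) → ℤ) (ξ : Fin n → Fin (n+1) → ℕ)
    (hker : ∀ d : Fin (n+1) → ℤ, (∀ j, ∑ i, (ξ j i : ℤ) * d i = 0) →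
      ∃ k : ℤ, ∀ i, d i = k * c i)
    (hcort : ∀ j, ∑ i, (ξ j i : ℤ) * c i = 0)
    (i0 : Fin (n+1)) (hc0 : c i0 ≠ 0)
    (v : Fin n → ℕ) (β : Fin (n+1) → ℤ)
    (hβ : ∀ j, ∑ i, (ξ j i : ℤ) * β i = (v j : ℤ)) :
    ∃ _ : {k : ℤ // ∀ i, 0 ≤ β i + k * c i} ≃ {α : Fin (n+1) →₀ ℕ // weightOf ξ α = v},
      True := by
  classical
  have hwt : ∀ (k : ℤ), (∀ i, 0 ≤ β i + k * c i) →
      weightOf ξ (Finsupp.equivFunOnFinite.symm (fun i => (β i + k * c i).toNat)) = v := by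
    intro k hk
    funext j
    have : ((∑ i, ξ j i * ((β i + k * c i).toNat) : ℕ) : ℤ) = (v j : ℤ) := by
      push_cast
      calc ∑ i, (ξ j i : ℤ) * ((β i + k * c i).toNat : ℤ)
          = ∑ i, (ξ j i : ℤ) * (β i + k * c i) := by
            apply Finset.sum_congr rfl
            intro i _
            rw [Int.toNat_of_nonneg (hk i)]
        _ = (∑ i, (ξ j i : ℤ) * β i) + k * ∑ i, (ξ j i : ℤ) * c i := by
            rw [Finset.mul_sum, ← Finset.sum_add_distrib]
            apply Finset.sum_congr rfl
            intro i _; ring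
        _ = (v j : ℤ) := by rw [hβ j, hcort j]; ring
    have h2 : weightOf ξ (Finsupp.equivFunOnFinite.symm (fun i => (β i + k * c i).toNat)) j
        = ∑ i, ξ j i * ((β i + k * c i).toNat) := by
      unfold weightOf
      simp [Finsupp.equivFunOnFinite]
    rw [h2]
    exact_mod_cast this
  let f : {k : ℤ // ∀ i, 0 ≤ β i + k * c i} → {α : Fin (n+1) →₀ ℕ // weightOf ξ α = v} :=
    fun k => ⟨Finsupp.equivFunOnFinite.symm (fun i => (β i + k.1 * c i).toNat), hwt k.1 k.2⟩
  have hbij : Function.Bijective f := by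
    constructor
    · rintro ⟨k, hk⟩ ⟨k', hk'⟩ h
      have h1 : (fun i => (β i + k * c i).toNat) = (fun i => (β i + k' * c i).toNat) := by
        have := congrArg Subtype.val h
        simpa [f] using Finsupp.equivFunOnFinite.symm.injective this
      have h2 := congrFun h1 i0
      have h3 : β i0 + k * c i0 = β i0 + k' * c i0 := by
        rw [← Int.toNat_of_nonneg (hk i0), ← Int.toNat_of_nonneg (hk' i0), h2]
      have : k = k' := by
        have := mul_right_cancel₀ hc0 (by linarith : k * c i0 = k' * c i0)
        exact this
      exact Subtype.ext this
    · rintro ⟨α, hα⟩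
      have hd : ∀ j, ∑ i, (ξ j i : ℤ) * ((α i : ℤ) - β i) = 0 := by
        intro j
        have h1 : ((∑ i, ξ j i * α i : ℕ) : ℤ) = (v j : ℤ) := by
          exact_mod_cast congrFun hα j
        push_cast at h1
        have : ∑ i, (ξ j i : ℤ) * ((α i : ℤ) - β i)
            = (∑ i, (ξ j i : ℤ) * (α i : ℤ)) - ∑ i, (ξ j i : ℤ) * β i := by
          rw [← Finset.sum_sub_distrib]
          apply Finset.sum_congr rfl
          intro i _; ring
        rw [this, h1, hβ j]; ring
      obtain ⟨k, hkeq⟩ := hker _ hd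
      have hknn : ∀ i, 0 ≤ β i + k * c i := by
        intro i
        have h1 := hkeq i
        have h2 : β i + k * c i = (α i : ℤ) := by linarith
        rw [h2]; exact Int.ofNat_nonneg _
      refine ⟨⟨k, hknn⟩, ?_⟩
      apply Subtype.ext
      simp only [f]
      have hfun : (fun i => (β i + k * c i).toNat) = ⇑α := by
        funext i
        have h1 := hkeq i
        have h2 : β i + k * c i = (α i : ℤ) := by linarith
        rw [h2, Int.toNat_natCast]
      rw [hfun]
      exact Finsupp.equivFunOnFinite_symm_coe α
  exact ⟨Equiv.ofBijective f hbij, trivial⟩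

lemma pos_case {c β k : ℤ} (hc : 0 < c) : 0 ≤ β + k * c ↔ -(β / c) ≤ k := by
  rw [neg_le, Int.le_ediv_iff_mul_le hc]
  constructor
  · intro h; nlinarith
  · intro h; nlinarith

lemma neg_case {c β k : ℤ} (hc : c < 0) : 0 ≤ β + k * c ↔ k ≤ β / (-c) := by
  rw [Int.le_ediv_iff_mul_le (by omega : (0:ℤ) < -c)]
  constructor
  · intro h; nlinarith
  · intro h; nlinarith

lemma Kset_eq_Icc {n : ℕ} (c : Fin (n+1) → ℤ) (β : Fin (n+1) → ℤ)
    (hP : (Finset.univ.filter (fun i => 0 < c i)).Nonempty)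
    (hN : (Finset.univ.filter (fun i => c i < 0)).Nonempty)
    (h0 : ∀ i, c i = 0 → 0 ≤ β i) :
    {k : ℤ | ∀ i, 0 ≤ β i + k * c i}
      = Set.Icc ((Finset.univ.filter (fun i => 0 < c i)).sup' hP (fun i => -(β i / c i)))
          ((Finset.univ.filter (fun i => c i < 0)).inf' hN (fun i => β i / (-c i))) := by
  ext k
  simp only [Set.mem_setOf_eq, Set.mem_Icc, Finset.sup'_le_iff, Finset.le_inf'_iff,
    Finset.mem_filter, Finset.mem_univ, true_and]
  constructor
  · intro h
    exact ⟨fun i hi => (pos_case hi).1 (h i), fun i hi => (neg_case hi).1 (h i)⟩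
  · rintro ⟨h1, h2⟩ i
    rcases lt_trichotomy (c i) 0 with hc | hc | hc
    · exact (neg_case hc).2 (h2 i hc)
    · simpa [hc] using h0 i hc
    · exact (pos_case hc).2 (h1 i hc)

lemma ediv_add_ediv_ge {d e x y : ℤ} (hd : 0 < d) (he : 0 < e) (h : 0 ≤ e * x + d * y) :
    -1 ≤ x / d + y / e := by
  have h1 : d * (x / d) + x % d = x := Int.mul_ediv_add_emod x d
  have h2 : e * (y / e) + y % e = y := Int.mul_ediv_add_emod y e
  have h3 : x % d < d := Int.emod_lt_of_pos x hd
  have h4 : y % e < e := Int.emod_lt_of_pos y he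
  nlinarith [mul_pos hd he]

/-- Counting the fiber via the interval of translates by `c`. -/
lemma fiber_count {n : ℕ} (c : Fin (n+1) → ℤ) (ξ : Fin n → Fin (n+1) → ℕ)
    (hker : ∀ d : Fin (n+1) → ℤ, (∀ j, ∑ i, (ξ j i : ℤ) * d i = 0) →
      ∃ k : ℤ, ∀ i, d i = k * c i)
    (hcort : ∀ j, ∑ i, (ξ j i : ℤ) * c i = 0)
    (i0 : Fin (n+1)) (hc0 : c i0 ≠ 0)
    (hP : (Finset.univ.filter (fun i => 0 < c i)).Nonempty)
    (hN : (Finset.univ.filter (fun i => c i < 0)).Nonempty)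
    (v : Fin n → ℕ) (β : Fin (n+1) → ℤ)
    (hβ : ∀ j, ∑ i, (ξ j i : ℤ) * β i = (v j : ℤ))
    (h0 : ∀ i, c i = 0 → 0 ≤ β i) :
    {α : Fin (n+1) →₀ ℕ | weightOf ξ α = v}.Finite ∧
    {α : Fin (n+1) →₀ ℕ | weightOf ξ α = v}.ncard =
      ((Finset.univ.filter (fun i => c i < 0)).inf' hN (fun i => β i / (-c i)) + 1
        - (Finset.univ.filter (fun i => 0 < c i)).sup' hP (fun i => -(β i / c i))).toNat := by
  obtain ⟨e, -⟩ := fib_equiv c ξ hker hcort i0 hc0 v β hβ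
  have hicc := Kset_eq_Icc c β hP hN h0
  set L := (Finset.univ.filter (fun i => 0 < c i)).sup' hP (fun i => -(β i / c i)) with hL
  set U := (Finset.univ.filter (fun i => c i < 0)).inf' hN (fun i => β i / (-c i)) with hU
  have hsub : {k : ℤ // ∀ i, 0 ≤ β i + k * c i} ≃ (Set.Icc L U : Set ℤ) := by
    apply Equiv.subtypeEquiv (Equiv.refl ℤ)
    intro k
    constructor
    · intro hk
      have : k ∈ {k : ℤ | ∀ i, 0 ≤ β i + k * c i} := hk
      rw [hicc] at this
      exact this
    · intro hk
      have : k ∈ {k : ℤ | ∀ i, 0 ≤ β i + k * c i} := by rw [hicc]; exact hk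
      exact this
  have hcardIcc : Nat.card (Set.Icc L U : Set ℤ) = (U + 1 - L).toNat := by
    rw [← Finset.coe_Icc, Nat.card_coe_set_eq, Set.ncard_coe_finset, Int.card_Icc]
  have e2 : (Set.Icc L U : Set ℤ) ≃ {α : Fin (n+1) →₀ ℕ | weightOf ξ α = v} :=
    (hsub.symm.trans e)
  have hfinite : Finite ({α : Fin (n+1) →₀ ℕ | weightOf ξ α = v} : Set _) := by
    have : Finite (Set.Icc L U : Set ℤ) := Set.finite_Icc L U
    exact Finite.of_equiv _ e2
  refine ⟨Set.finite_coe_iff.1 hfinite, ?_⟩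
  rw [← Nat.card_coe_set_eq, ← Nat.card_congr e2, hcardIcc]

lemma pair_nonneg {n : ℕ} (c : Fin (n+1) → ℤ) (γ : Fin (n+1) → ℤ)
    (hMz : ∀ η : Fin (n+1) → ℝ, (∀ i, 0 ≤ η i) → (∑ i, η i * (c i : ℝ)) = 0 →
        0 ≤ ∑ i, η i * (γ i : ℝ))
    (i j : Fin (n+1)) (hci : c i < 0) (hcj : 0 < c j) :
    (0:ℤ) ≤ c j * γ i + (-c i) * γ j := by
  have hij : i ≠ j := by intro h; rw [h] at hci; omega
  set η : Fin (n+1) → ℝ :=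
    fun t => (if t = i then ((c j : ℝ)) else 0) + (if t = j then ((-(c i) : ℤ) : ℝ) else 0)
    with hη
  have hnn : ∀ t, 0 ≤ η t := by
    intro t
    rw [hη]
    have h1 : (0:ℝ) ≤ (if t = i then ((c j : ℝ)) else 0) := by
      split
      · exact_mod_cast hcj.le
      · exact le_refl 0
    have h2 : (0:ℝ) ≤ (if t = j then ((-(c i) : ℤ) : ℝ) else 0) := by
      split
      · exact_mod_cast (by omega : (0:ℤ) ≤ -c i)
      · exact le_refl 0
    exact add_nonneg h1 h2
  have hsumgen : ∀ x : Fin (n+1) → ℝ,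
      (∑ t, η t * x t) = (c j : ℝ) * x i + ((-(c i) : ℤ) : ℝ) * x j := by
    intro x
    rw [hη]
    simp only [add_mul, ite_mul, zero_mul]
    rw [Finset.sum_add_distrib, Finset.sum_ite_eq' Finset.univ i (fun t => (c j : ℝ) * x t),
      Finset.sum_ite_eq' Finset.univ j (fun t => ((-(c i):ℤ) : ℝ) * x t)]
    simp
  have hsum0 : (∑ t, η t * (c t : ℝ)) = 0 := by
    rw [hsumgen]
    push_cast
    ring
  have := hMz η hnn hsum0
  rw [hsumgen] at this
  have h9 : (0:ℝ) ≤ ((c j * γ i + (-c i) * γ j : ℤ) : ℝ) := by push_cast; push_cast at this; linarith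
  exact_mod_cast h9

/-- Lemma 4: if `R_w` contains two coprime monomials and `z ∈ M`, then
`dim R_{w+z} = dim R_w + dim R_z - 1`. -/
theorem finrank_Rw_add {K : Type*} [Field K] {n : ℕ}
    (c : Fin (n+1) → ℤ) (ξ : Fin n → Fin (n+1) → ℕ)
    (hyp : GradingHyp c ξ) (w : Fin n → ℕ) (z : Fin n → ℕ)
    (hz : z ∈ weightSet c ξ)
    (hw : ∃ a b : Fin (n+1) →₀ ℕ, a ≠ b ∧ weightOf ξ a = w ∧ weightOf ξ b = w ∧
      ∀ i, min (a i) (b i) = 0) :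
    Module.finrank K (Rw K ξ (w + z)) + 1
      = Module.finrank K (Rw K ξ w) + Module.finrank K (Rw K ξ z) := by
  classical
  obtain ⟨⟨ip, hip⟩, ⟨im, him⟩, hgcd, hli, hcort⟩ := hyp
  have hcne : c ≠ 0 := by
    intro h
    rw [h] at hip
    exact lt_irrefl 0 hip
  have hc0 : c ip ≠ 0 := ne_of_gt hip
  have hker : ∀ d : Fin (n+1) → ℤ, (∀ j, ∑ i, (ξ j i : ℤ) * d i = 0) →
      ∃ k : ℤ, ∀ i, d i = k * c i := by
    intro d hd
    obtain ⟨t, ht⟩ := ker_real_aux c ξ hli hcne hcort d hd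
    exact ker_int_aux c ip hc0 hgcd d t ht
  have hP : (Finset.univ.filter (fun i => 0 < c i)).Nonempty :=
    ⟨ip, by simp [hip]⟩
  have hN : (Finset.univ.filter (fun i => c i < 0)).Nonempty :=
    ⟨im, by simp [him]⟩
  obtain ⟨γ, hγw, hMz⟩ := hz
  -- nonnegativity of γ on coordinates where c vanishes
  have h0γ : ∀ i, c i = 0 → 0 ≤ γ i := by
    intro i hci
    have hη : ∀ t : Fin (n+1), (0:ℝ) ≤ (if t = i then (1:ℝ) else 0) := by
      intro t; split <;> norm_num
    have hsum : (∑ t, (if t = i then (1:ℝ) else 0) * (c t : ℝ)) = 0 := by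
      simp [ite_mul, hci]
    have := hMz (fun t => if t = i then (1:ℝ) else 0) hη hsum
    have h2 : (0:ℝ) ≤ (γ i : ℝ) := by
      simpa [ite_mul] using this
    exact_mod_cast h2
  set L := (Finset.univ.filter (fun i => 0 < c i)).sup' hP (fun i => -(γ i / c i)) with hLdef
  set U := (Finset.univ.filter (fun i => c i < 0)).inf' hN (fun i => γ i / (-c i)) with hUdef
  -- key inequality between the interval endpoints for z
  have hLU : L ≤ U + 1 := by
    rw [hLdef]
    apply Finset.sup'_le
    intro j hj
    rw [Finset.mem_filter] at hj
    have hcj : 0 < c j := hj.2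
    have hstep : -(γ j / c j) - 1 ≤ U := by
      rw [hUdef]
      apply Finset.le_inf'
      intro i hi
      rw [Finset.mem_filter] at hi
      have hci : c i < 0 := hi.2
      have hd : (0:ℤ) < -c i := by omega
      have key : (0:ℤ) ≤ c j * γ i + (-c i) * γ j := pair_nonneg c γ hMz i j hci hcj
      have := ediv_add_ediv_ge hd hcj key
      linarith
    linarith
  -- fiber count for z
  obtain ⟨finz, cardz⟩ := fiber_count c ξ hker hcort ip hc0 hP hN z γ hγw h0γ
  -- reduce to the case `m > 0` by symmetry in `a, b`
  suffices H : ∀ (a b : Fin (n+1) →₀ ℕ) (m : ℤ), 0 < m →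
      (∀ i, (b i : ℤ) = (a i : ℤ) + m * c i) → weightOf ξ a = w →
      (∀ i, min (a i) (b i) = 0) →
      Module.finrank K (Rw K ξ (w + z)) + 1
        = Module.finrank K (Rw K ξ w) + Module.finrank K (Rw K ξ z) by
    obtain ⟨a, b, hab, hwa, hwb, hmin⟩ := hw
    have hd : ∀ j, ∑ i, (ξ j i : ℤ) * ((b i : ℤ) - (a i : ℤ)) = 0 := by
      intro j
      have h1 : ((∑ i, ξ j i * a i : ℕ) : ℤ) = (w j : ℤ) := by
        exact_mod_cast congrFun hwa j
      have h2 : ((∑ i, ξ j i * b i : ℕ) : ℤ) = (w j : ℤ) := by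
        exact_mod_cast congrFun hwb j
      push_cast at h1 h2
      have h3 : ∑ i, (ξ j i : ℤ) * ((b i : ℤ) - (a i : ℤ))
          = (∑ i, (ξ j i : ℤ) * (b i : ℤ)) - ∑ i, (ξ j i : ℤ) * (a i : ℤ) := by
        rw [← Finset.sum_sub_distrib]
        exact Finset.sum_congr rfl fun i _ => by ring
      rw [h3, h1, h2]; ring
    obtain ⟨m, hm⟩ := hker _ hd
    have hm0 : m ≠ 0 := by
      intro h
      apply hab
      apply Finsupp.ext
      intro i
      have := hm i
      rw [h, zero_mul] at this
      exact_mod_cast (by linarith : (a i : ℤ) = (b i : ℤ))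
    rcases hm0.lt_or_gt with hneg | hpos
    · exact H b a (-m) (by omega)
        (fun i => by have := hm i; linarith) hwb
        (fun i => by rw [min_comm]; exact hmin i)
    · exact H a b m hpos (fun i => by have := hm i; linarith) hwa hmin
  intro a b m hm hrel hwa hmin
  -- structure of the coprime pair
  have haP : ∀ i, 0 < c i → a i = 0 := by
    intro i hci
    have h1 : (a i : ℤ) < (b i : ℤ) := by nlinarith [hrel i]
    have h2 : a i < b i := by exact_mod_cast h1
    have := hmin i
    omega
  have haN : ∀ i, c i < 0 → (a i : ℤ) = m * (-c i) := by
    intro i hci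
    have h1 : (b i : ℤ) < (a i : ℤ) := by nlinarith [hrel i]
    have h2 : b i < a i := by exact_mod_cast h1
    have h3 : b i = 0 := by have := hmin i; omega
    have h4 := hrel i
    rw [h3] at h4
    push_cast at h4
    linarith
  -- fiber count for w
  have hβw : ∀ j, ∑ i, (ξ j i : ℤ) * ((a i : ℕ) : ℤ) = (w j : ℤ) := by
    intro j
    have h1 : ((∑ i, ξ j i * a i : ℕ) : ℤ) = (w j : ℤ) := by
      exact_mod_cast congrFun hwa j
    push_cast at h1
    exact h1
  obtain ⟨finw, cardw⟩ := fiber_count c ξ hker hcort ip hc0 hP hN w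
    (fun i => ((a i : ℕ) : ℤ)) hβw (fun i _ => Int.ofNat_nonneg _)
  have hLw : (Finset.univ.filter (fun i => 0 < c i)).sup' hP
      (fun i => -(((a i : ℕ) : ℤ) / c i)) = 0 := by
    rw [Finset.sup'_congr hP rfl (g := fun _ => (0:ℤ)) ?_]
    · exact Finset.sup'_const hP 0
    · intro i hi
      rw [Finset.mem_filter] at hi
      rw [haP i hi.2]
      simp
  have hUw : (Finset.univ.filter (fun i => c i < 0)).inf' hN
      (fun i => ((a i : ℕ) : ℤ) / (-c i)) = m := by
    rw [Finset.inf'_congr hN rfl (g := fun _ => m) ?_]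
    · exact Finset.inf'_const hN m
    · intro i hi
      rw [Finset.mem_filter] at hi
      rw [haN i hi.2]
      exact Int.mul_ediv_cancel m (by have := hi.2; omega)
  rw [hLw, hUw] at cardw
  -- fiber count for w + z
  have hβwz : ∀ j, ∑ i, (ξ j i : ℤ) * (((a i : ℕ) : ℤ) + γ i) = ((w + z) j : ℤ) := by
    intro j
    have h1 : ∑ i, (ξ j i : ℤ) * (((a i : ℕ) : ℤ) + γ i)
        = (∑ i, (ξ j i : ℤ) * ((a i : ℕ) : ℤ)) + ∑ i, (ξ j i : ℤ) * γ i := by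
      rw [← Finset.sum_add_distrib]
      exact Finset.sum_congr rfl fun i _ => by ring
    rw [h1, hβw j, hγw j]
    have : (w + z) j = w j + z j := rfl
    rw [this]
    push_cast
    ring
  obtain ⟨finwz, cardwz⟩ := fiber_count c ξ hker hcort ip hc0 hP hN (w + z)
    (fun i => ((a i : ℕ) : ℤ) + γ i) hβwz
    (fun i hci => add_nonneg (Int.ofNat_nonneg _) (h0γ i hci))
  have hLwz : (Finset.univ.filter (fun i => 0 < c i)).sup' hP
      (fun i => -((((a i : ℕ) : ℤ) + γ i) / c i)) = L := by
    rw [hLdef]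
    apply Finset.sup'_congr hP rfl
    intro i hi
    rw [Finset.mem_filter] at hi
    rw [haP i hi.2]
    norm_num
  have hUwz : (Finset.univ.filter (fun i => c i < 0)).inf' hN
      (fun i => (((a i : ℕ) : ℤ) + γ i) / (-c i)) = U + m := by
    have hterm : ∀ i ∈ (Finset.univ.filter (fun i => c i < 0)),
        (((a i : ℕ) : ℤ) + γ i) / (-c i) = γ i / (-c i) + m := by
      intro i hi
      rw [Finset.mem_filter] at hi
      rw [haN i hi.2, add_comm (m * (-c i)) (γ i)]
      rw [Int.add_mul_ediv_right (γ i) m (by have := hi.2; omega : (-c i) ≠ 0)]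
    rw [Finset.inf'_congr hN rfl hterm]
    apply le_antisymm
    · obtain ⟨i, hi, hUeq⟩ := Finset.exists_mem_eq_inf' hN (fun i => γ i / (-c i))
      calc (Finset.univ.filter (fun i => c i < 0)).inf' hN (fun i => γ i / (-c i) + m)
          ≤ γ i / (-c i) + m := Finset.inf'_le _ hi
        _ = U + m := by rw [hUdef, ← hUeq]
    · apply Finset.le_inf'
      intro i hi
      have h1 : U ≤ γ i / (-c i) := by
        rw [hUdef]
        exact Finset.inf'_le _ hi
      linarith
  rw [hLwz, hUwz] at cardwz
  -- конец: assemble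
  rw [finrank_Rw_eq_ncard K ξ (w + z) finwz, finrank_Rw_eq_ncard K ξ w finw,
    finrank_Rw_eq_ncard K ξ z finz, cardwz, cardw, cardz]
  omega
end
end

section
/- Let E be a descendant loose edge (parallel to a vector c with c_i ≥ 0 for i < n and c_n < 0), with the associated weight grading R_v and monoid M. Let G ∈ R_w and H ∈ R_z be coprime polynomials with G monic in x_n. Then for every i ∈ M, G·R_{z+i} + H·R_{w+i} = R_{w+z+i}. -/
noncomputable section

open MvPolynomial

/-- The direction `c` is descendant: `c_i ≥ 0` for `i < n+1` last coordinate negative. -/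
def IsDescendantDir {n : ℕ} (c : Fin (n+1) → ℤ) : Prop :=
  (∀ i : Fin n, 0 ≤ c i.castSucc) ∧ c (Fin.last n) < 0

/-- `G` is monic with respect to the last variable: the coefficient of the highest power
of `x_{n+1}` occurring in `G` (as a polynomial in `x_{n+1}`) is the constant `1`. -/
def MonicInLast {K : Type*} [Field K] {n : ℕ} (G : MvPolynomial (Fin (n+1)) K) : Prop :=
  ∃ d : ℕ, G.coeff (Finsupp.single (Fin.last n) d) = 1 ∧
    ∀ α ∈ G.support, α (Fin.last n) ≤ d ∧
      (α (Fin.last n) = d → α = Finsupp.single (Fin.last n) d)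

open Matrix

lemma finset_gcd_bezout {ι : Type*} [DecidableEq ι] (s : Finset ι) (f : ι → ℤ) :
    ∃ u : ι → ℤ, (s.gcd f : ℤ) = ∑ i ∈ s, u i * f i := by
  induction s using Finset.induction with
  | empty => exact ⟨0, by simp⟩
  | @insert a s ha ih =>
    obtain ⟨u, hu⟩ := ih
    obtain ⟨A, B, hAB⟩ : ∃ A B : ℤ, (GCDMonoid.gcd (f a) (s.gcd f) : ℤ)
        = f a * A + (s.gcd f) * B :=
      ⟨_, _, by rw [← Int.coe_gcd, Int.gcd_eq_gcd_ab]⟩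
    refine ⟨fun i => if i = a then A else u i * B, ?_⟩
    rw [Finset.gcd_insert, Finset.sum_insert ha, hAB, hu, Finset.sum_mul]
    have h3 : ∀ i ∈ s, u i * f i * B
        = (if i = a then A else u i * B) * f i := by
      intro i hi
      rw [if_neg (by rintro rfl; exact ha hi)]
      ring
    rw [Finset.sum_congr rfl h3]
    simp [mul_comm]


/-- The integer kernel of the weight matrix is `ℤ·c`. -/
lemma ker_eq_c {n : ℕ} (c : Fin (n+1) → ℤ) (ξ : Fin n → Fin (n+1) → ℕ)
    (hind : LinearIndependent ℝ (fun j : Fin n => fun i : Fin (n+1) => (ξ j i : ℝ)))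
    (hgcd : Finset.univ.gcd c = 1)
    (horth : ∀ j, ∑ i, (ξ j i : ℤ) * c i = 0)
    (hc0 : c ≠ 0)
    (v : Fin (n+1) → ℤ) (hv : ∀ j, ∑ i, (ξ j i : ℤ) * v i = 0) :
    ∃ k : ℤ, ∀ i, v i = k * c i := by
  classical
  -- the real matrix
  set A : Matrix (Fin n) (Fin (n+1)) ℝ := fun j i => (ξ j i : ℝ) with hA
  -- rank of A is n
  have hker : LinearMap.ker (Matrix.mulVecLin Aᵀ) = ⊥ := by
    rw [LinearMap.ker_eq_bot]
    intro x y hxy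
    have h := fun i => congrFun hxy i
    simp only [Matrix.mulVecLin_apply, Matrix.mulVec, dotProduct,
      Matrix.transpose_apply] at h
    simp only [hA] at h
    -- h i : ∑ j, ξ j i * x j = ∑ j, ξ j i * y j
    have := linearIndependent_iff'.mp hind Finset.univ (x - y) ?_
    · funext j; have := this j (Finset.mem_univ j); simpa [sub_eq_zero] using this
    · funext i
      simp only [Finset.sum_apply, Pi.smul_apply, smul_eq_mul, Pi.sub_apply, Pi.zero_apply]
      have := h i
      rw [Finset.sum_congr rfl (fun j _ => by ring : ∀ j ∈ Finset.univ,
        (x j - y j) * (ξ j i : ℝ) = (ξ j i : ℝ) * x j - (ξ j i : ℝ) * y j)]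
      rw [Finset.sum_sub_distrib, this, sub_self]
  have hrankT : Aᵀ.rank = n := by
    have := LinearMap.finrank_range_add_finrank_ker (Matrix.mulVecLin Aᵀ)
    rw [hker, finrank_bot] at this
    simp only [Matrix.rank, add_zero] at this ⊢
    rw [this]
    simp [Module.finrank_pi]
  have hrank : A.rank = n := by rw [← Matrix.rank_transpose, hrankT]
  -- kernel of A has dimension 1
  have hkerdim : Module.finrank ℝ (LinearMap.ker (Matrix.mulVecLin A)) = 1 := by
    have := LinearMap.finrank_range_add_finrank_ker (Matrix.mulVecLin A)
    have h2 : Module.finrank ℝ (Fin (n+1) → ℝ) = n + 1 := by simp [Module.finrank_pi]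
    rw [h2] at this
    have : A.rank + Module.finrank ℝ (LinearMap.ker (Matrix.mulVecLin A)) = n + 1 := this
    omega
  -- c is in the kernel
  have hcker : (fun i => (c i : ℝ)) ∈ LinearMap.ker (Matrix.mulVecLin A) := by
    rw [LinearMap.mem_ker]
    funext j
    have := horth j
    have : ((∑ i, (ξ j i : ℤ) * c i : ℤ) : ℝ) = 0 := by rw [this]; simp
    push_cast at this
    simp only [Matrix.mulVecLin_apply, Matrix.mulVec, dotProduct]
    simpa [hA] using this
  have hcR : (fun i => (c i : ℝ)) ≠ 0 := by
    intro h
    apply hc0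
    funext i
    have : (c i : ℝ) = 0 := by simpa using congrFun h i
    exact_mod_cast this
  -- span c = ker
  have hspan : Submodule.span ℝ {(fun i => (c i : ℝ))} = LinearMap.ker (Matrix.mulVecLin A) := by
    apply Submodule.eq_of_le_of_finrank_le
    · rw [Submodule.span_le, Set.singleton_subset_iff]; exact hcker
    · rw [hkerdim, finrank_span_singleton hcR]
  -- v is in the kernel over ℝ
  have hvker : (fun i => (v i : ℝ)) ∈ LinearMap.ker (Matrix.mulVecLin A) := by
    rw [LinearMap.mem_ker]
    funext j
    have := hv j
    have : ((∑ i, (ξ j i : ℤ) * v i : ℤ) : ℝ) = 0 := by rw [this]; simp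
    push_cast at this
    simp only [Matrix.mulVecLin_apply, Matrix.mulVec, dotProduct]
    simpa [hA] using this
  rw [← hspan, Submodule.mem_span_singleton] at hvker
  obtain ⟨r, hr⟩ := hvker
  -- r is an integer, via Bezout
  obtain ⟨u, hu⟩ := finset_gcd_bezout Finset.univ c
  rw [hgcd] at hu
  refine ⟨∑ i, u i * v i, fun i => ?_⟩
  have hri : ∀ i, (v i : ℝ) = r * (c i : ℝ) := fun i => by
    simpa using (congrFun hr i).symm
  have h1R : (1 : ℝ) = ∑ i, (u i : ℝ) * (c i : ℝ) := by exact_mod_cast hu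
  have hrZ : r = ((∑ i, u i * v i : ℤ) : ℝ) := by
    push_cast
    calc r = r * (1 : ℝ) := by ring
    _ = r * ∑ i, (u i : ℝ) * (c i : ℝ) := by rw [← h1R]
    _ = ∑ i, (u i : ℝ) * (r * (c i : ℝ)) := by
        rw [Finset.mul_sum]; apply Finset.sum_congr rfl; intros; ring
    _ = ∑ i, (u i : ℝ) * (v i : ℝ) := by
        apply Finset.sum_congr rfl; intro i _; rw [hri i]
  have : (v i : ℝ) = ((∑ j, u j * v j : ℤ) : ℝ) * (c i : ℝ) := by rw [hri i, ← hrZ]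
  exact_mod_cast this


lemma weightOf_add {n : ℕ} (ξ : Fin n → Fin (n+1) → ℕ) (a b : Fin (n+1) →₀ ℕ) :
    weightOf ξ (a + b) = weightOf ξ a + weightOf ξ b := by
  funext j
  simp only [weightOf, Finsupp.add_apply, Pi.add_apply, mul_add]
  rw [Finset.sum_add_distrib]

/-- The submodule of polynomials all whose monomials have weight `v`. -/
def suppWt (K : Type*) [Field K] {n : ℕ} (ξ : Fin n → Fin (n+1) → ℕ) (v : Fin n → ℕ) :
    Submodule K (MvPolynomial (Fin (n+1)) K) where
  carrier := {P | ∀ α ∈ P.support, weightOf ξ α = v}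
  add_mem' := by
    intro P Q hP hQ α hα
    rcases Finset.mem_union.mp (MvPolynomial.support_add hα) with h | h
    · exact hP α h
    · exact hQ α h
  zero_mem' := by intro α hα; simp at hα
  smul_mem' := by
    intro c P hP α hα
    exact hP α (MvPolynomial.support_smul hα)

lemma mem_Rw_iff {K : Type*} [Field K] {n : ℕ} (ξ : Fin n → Fin (n+1) → ℕ)
    (v : Fin n → ℕ) (P : MvPolynomial (Fin (n+1)) K) :
    P ∈ Rw K ξ v ↔ ∀ α ∈ P.support, weightOf ξ α = v := by
  classical
  constructor
  · intro hP
    have : Rw K ξ v ≤ suppWt K ξ v := by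
      rw [Rw, Submodule.span_le]
      rintro p ⟨α, hα, rfl⟩
      intro β hβ
      rw [MvPolynomial.support_monomial] at hβ
      simp only [one_ne_zero, if_false] at hβ
      rw [Finset.mem_singleton] at hβ
      subst hβ; exact hα
    exact this hP
  · intro h
    rw [← MvPolynomial.support_sum_monomial_coeff P]
    apply Submodule.sum_mem
    intro α hα
    have : (MvPolynomial.monomial α (P.coeff α) : MvPolynomial (Fin (n+1)) K)
        = P.coeff α • MvPolynomial.monomial α 1 := by
      rw [MvPolynomial.smul_monomial, smul_eq_mul, mul_one]
    rw [this]
    exact Submodule.smul_mem _ _ (Submodule.subset_span ⟨α, h α hα, rfl⟩)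

lemma mul_mem_Rw {K : Type*} [Field K] {n : ℕ} (ξ : Fin n → Fin (n+1) → ℕ)
    {v v' : Fin n → ℕ} {P Q : MvPolynomial (Fin (n+1)) K}
    (hP : P ∈ Rw K ξ v) (hQ : Q ∈ Rw K ξ v') : P * Q ∈ Rw K ξ (v + v') := by
  classical
  rw [mem_Rw_iff] at hP hQ ⊢
  intro α hα
  have := MvPolynomial.support_mul P Q hα
  rw [Finset.mem_add] at this
  obtain ⟨a, ha, b, hb, rfl⟩ := this
  rw [weightOf_add, hP a ha, hQ b hb]

lemma X_dvd_of_support {K : Type*} [Field K] {n : ℕ} (s : Fin (n+1))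
    (P : MvPolynomial (Fin (n+1)) K) (h : ∀ α ∈ P.support, α s ≠ 0) :
    (MvPolynomial.X s : MvPolynomial (Fin (n+1)) K) ∣ P := by
  rw [← MvPolynomial.support_sum_monomial_coeff P]
  apply Finset.dvd_sum
  intro α hα
  exact MvPolynomial.X_dvd_monomial.mpr (Or.inr (h α hα))


/-- If `S` is weighted homogeneous of degree `p`, `S*T` is weighted homogeneous of
degree `m`, with `S*T ≠ 0`, then `T` is weighted homogeneous of some degree `q` with
`p + q = m`. -/
lemma isWeightedHomogeneous_of_mul {K : Type*} [Field K] {σ : Type*}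
    (u : σ → ℕ) {S T : MvPolynomial σ K} {p m : ℕ}
    (hS : S.IsWeightedHomogeneous u p) (hST : (S * T).IsWeightedHomogeneous u m)
    (hS0 : S ≠ 0) (hT0 : T ≠ 0) :
    ∃ q, T.IsWeightedHomogeneous u q ∧ p + q = m := by
  classical
  -- minimal weight occurring in T
  obtain ⟨q0, hq0mem, hq0min⟩ : ∃ q0 ∈ T.support.image (Finsupp.weight u),
      ∀ x ∈ T.support.image (Finsupp.weight u), q0 ≤ x := by
    apply Finset.exists_min_image
    simpa using hT0
  refine ⟨q0, ?_, ?_⟩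
  all_goals {
  have hT0comp : MvPolynomial.weightedHomogeneousComponent u q0 T ≠ 0 := by
    obtain ⟨d, hd, hdw⟩ := Finset.mem_image.mp hq0mem
    intro hzero
    have := MvPolynomial.coeff_weightedHomogeneousComponent (w := u) q0 T d
    rw [hzero, if_pos hdw] at this
    exact (MvPolynomial.mem_support_iff.mp hd) this.symm
  set T0 := MvPolynomial.weightedHomogeneousComponent u q0 T with hT0def
  set T1 := T - T0 with hT1def
  have hT0hom : T0.IsWeightedHomogeneous u q0 :=
    MvPolynomial.weightedHomogeneousComponent_isWeightedHomogeneous q0 T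
  have hT1supp : ∀ d ∈ T1.support, q0 < Finsupp.weight u d := by
    intro d hd
    rw [MvPolynomial.mem_support_iff] at hd
    have hcoeff : T1.coeff d = T.coeff d - (if Finsupp.weight u d = q0 then T.coeff d else 0) := by
      rw [hT1def, MvPolynomial.coeff_sub, MvPolynomial.coeff_weightedHomogeneousComponent]
    by_cases hw : Finsupp.weight u d = q0
    · rw [if_pos hw, sub_self] at hcoeff; exact absurd hcoeff hd
    · rw [if_neg hw, sub_zero] at hcoeff
      have hdT : d ∈ T.support := MvPolynomial.mem_support_iff.mpr (hcoeff ▸ hd)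
      have := hq0min _ (Finset.mem_image_of_mem _ hdT)
      omega
  -- the degree p + q0 appears in S * T
  have hST0 : S * T0 ≠ 0 := mul_ne_zero hS0 hT0comp
  obtain ⟨d0, hd0⟩ := MvPolynomial.ne_zero_iff.mp hST0
  have hd0w : Finsupp.weight u d0 = p + q0 := (hS.mul hT0hom) hd0
  have hsplit : S * T = S * T0 + S * T1 := by rw [hT1def]; ring
  have hsuppST1 : ∀ d ∈ (S * T1).support, p + q0 < Finsupp.weight u d := by
    intro d hd
    have := MvPolynomial.support_mul S T1 hd
    rw [Finset.mem_add] at this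
    obtain ⟨a, ha, b, hb, rfl⟩ := this
    rw [map_add, hS (MvPolynomial.mem_support_iff.mp ha)]
    have := hT1supp b hb
    omega
  have hm : m = p + q0 := by
    have hcoeff0 : (S * T1).coeff d0 = 0 := by
      by_contra hne
      have := hsuppST1 d0 (MvPolynomial.mem_support_iff.mpr hne)
      omega
    have : (S * T).coeff d0 ≠ 0 := by
      rw [hsplit, MvPolynomial.coeff_add, hcoeff0, add_zero]; exact hd0
    rw [← hST this, hd0w]
  -- T1 must vanish
  have hT1zero : T1 = 0 := by
    by_contra hne
    have hST1 : S * T1 ≠ 0 := mul_ne_zero hS0 hne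
    obtain ⟨d1, hd1⟩ := MvPolynomial.ne_zero_iff.mp hST1
    have hgt := hsuppST1 d1 (MvPolynomial.mem_support_iff.mpr hd1)
    have hcoeff0 : (S * T0).coeff d1 = 0 := by
      by_contra hne'
      have := (hS.mul hT0hom) hne'
      omega
    have : (S * T).coeff d1 ≠ 0 := by
      rw [hsplit, MvPolynomial.coeff_add, hcoeff0, zero_add]; exact hd1
    have := hST this
    omega
  have hTT0 : T = T0 := by rw [hT1def] at hT1zero; linear_combination (norm := module) hT1zero
  first
  | (rw [hTT0]; exact hT0hom)
  | exact hm.symm }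


/-- The fiber of monomial exponents of weight `v`, parametrized by `Icc l h`. -/
lemma Rw_monomial_set_eq {K : Type*} [Field K] {n : ℕ}
    (c : Fin (n+1) → ℤ) (ξ : Fin n → Fin (n+1) → ℕ)
    (hker : ∀ v : Fin (n+1) → ℤ, (∀ j, ∑ i, (ξ j i : ℤ) * v i = 0) →
      ∃ k : ℤ, ∀ i, v i = k * c i)
    (horth : ∀ j, ∑ i, (ξ j i : ℤ) * c i = 0)
    (hclast : c (Fin.last n) < 0)
    (v : Fin n → ℕ) (δ : Fin (n+1) → ℤ)
    (hrep : ∀ j, ∑ i, (ξ j i : ℤ) * δ i = (v j : ℤ))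
    (l h : ℤ)
    (hl : ∀ k : ℤ, (∀ i : Fin n, 0 ≤ δ i.castSucc + k * c i.castSucc) ↔ l ≤ k)
    (hh : ∀ k : ℤ, k * (-(c (Fin.last n))) ≤ δ (Fin.last n) ↔ k ≤ h) :
    {p : MvPolynomial (Fin (n+1)) K |
        ∃ α : Fin (n+1) →₀ ℕ, weightOf ξ α = v ∧ p = MvPolynomial.monomial α (1 : K)}
      = (fun k : ℤ => (MvPolynomial.monomial
          (Finsupp.equivFunOnFinite.symm (fun i => (δ i + k * c i).toNat)) (1 : K)))
        '' (Finset.Icc l h : Set ℤ) := by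
  have hfeas : ∀ k : ℤ, k ∈ Finset.Icc l h → ∀ i, 0 ≤ δ i + k * c i := by
    intro k hk i
    rw [Finset.mem_Icc] at hk
    induction i using Fin.lastCases with
    | last =>
      have h1 := (hh k).mpr hk.2
      have h2 : k * -(c (Fin.last n)) = -(k * c (Fin.last n)) := by ring
      linarith
    | cast i => exact ((hl k).mpr hk.1) i
  ext p
  constructor
  · rintro ⟨α, hα, rfl⟩
    -- α - δ is in the kernel
    obtain ⟨k, hk⟩ := hker (fun i => (α i : ℤ) - δ i) (by
      intro j
      have h1 : ∑ i, (ξ j i : ℤ) * ((α i : ℤ) - δ i)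
          = (∑ i, (ξ j i : ℤ) * (α i : ℤ)) - ∑ i, (ξ j i : ℤ) * δ i := by
        rw [← Finset.sum_sub_distrib]; apply Finset.sum_congr rfl; intros; ring
      rw [h1, hrep j]
      have h2 : (∑ i, (ξ j i : ℤ) * (α i : ℤ)) = ((∑ i, ξ j i * α i : ℕ) : ℤ) := by push_cast; rfl
      rw [h2, ← hα]
      simp [weightOf])
    have hαk : ∀ i, (α i : ℤ) = δ i + k * c i := by intro i; have := hk i; omega
    have hmem : k ∈ Finset.Icc l h := by
      rw [Finset.mem_Icc]
      constructor
      · rw [← hl k]; intro i; rw [← hαk i.castSucc]; positivity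
      · rw [← hh k]
        have := hαk (Fin.last n)
        have : (0 : ℤ) ≤ δ (Fin.last n) + k * c (Fin.last n) := by rw [← this]; positivity
        nlinarith [this]
    refine ⟨k, hmem, ?_⟩
    have hfs : α = Finsupp.equivFunOnFinite.symm (fun i => (δ i + k * c i).toNat) := by
      apply Finsupp.ext
      intro i
      simp only [Finsupp.coe_equivFunOnFinite_symm]
      rw [← hαk i]
      simp
    rw [hfs]
  · rintro ⟨k, hk, rfl⟩
    refine ⟨_, ?_, rfl⟩
    funext j
    have : ((∑ i, ξ j i * (Finsupp.equivFunOnFinite.symm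
        (fun i => (δ i + k * c i).toNat)) i : ℕ) : ℤ) = (v j : ℤ) := by
      push_cast
      simp only [Finsupp.coe_equivFunOnFinite_symm]
      have hcast : ∀ i : Fin (n+1), ((((δ i + k * c i).toNat) : ℤ)) = δ i + k * c i := by
        intro i; exact Int.toNat_of_nonneg (hfeas k hk i)
      calc ∑ i, (ξ j i : ℤ) * (((δ i + k * c i).toNat : ℤ))
          = ∑ i, (ξ j i : ℤ) * (δ i + k * c i) := by
            apply Finset.sum_congr rfl; intro i _; rw [hcast i]
        _ = (∑ i, (ξ j i : ℤ) * δ i) + k * ∑ i, (ξ j i : ℤ) * c i := by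
            rw [Finset.mul_sum, ← Finset.sum_add_distrib]
            apply Finset.sum_congr rfl; intros; ring
        _ = (v j : ℤ) := by rw [hrep j, horth j]; ring
    exact_mod_cast this

lemma Rw_finrank {K : Type*} [Field K] {n : ℕ}
    (c : Fin (n+1) → ℤ) (ξ : Fin n → Fin (n+1) → ℕ)
    (hker : ∀ v : Fin (n+1) → ℤ, (∀ j, ∑ i, (ξ j i : ℤ) * v i = 0) →
      ∃ k : ℤ, ∀ i, v i = k * c i)
    (horth : ∀ j, ∑ i, (ξ j i : ℤ) * c i = 0)
    (hclast : c (Fin.last n) < 0)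
    (v : Fin n → ℕ) (δ : Fin (n+1) → ℤ)
    (hrep : ∀ j, ∑ i, (ξ j i : ℤ) * δ i = (v j : ℤ))
    (l h : ℤ)
    (hl : ∀ k : ℤ, (∀ i : Fin n, 0 ≤ δ i.castSucc + k * c i.castSucc) ↔ l ≤ k)
    (hh : ∀ k : ℤ, k * (-(c (Fin.last n))) ≤ δ (Fin.last n) ↔ k ≤ h) :
    Module.finrank K (Rw K ξ v) = (Finset.Icc l h).card
      ∧ FiniteDimensional K (Rw K ξ v) := by
  have hfeas : ∀ k : ℤ, k ∈ Finset.Icc l h → ∀ i, 0 ≤ δ i + k * c i := by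
    intro k hk i
    rw [Finset.mem_Icc] at hk
    induction i using Fin.lastCases with
    | last =>
      have h1 := (hh k).mpr hk.2
      have h2 : k * -(c (Fin.last n)) = -(k * c (Fin.last n)) := by ring
      linarith
    | cast i => exact ((hl k).mpr hk.1) i
  set expmap : ℤ → (Fin (n+1) →₀ ℕ) :=
    fun k => Finsupp.equivFunOnFinite.symm (fun i => (δ i + k * c i).toNat) with hexp
  have hset := Rw_monomial_set_eq (K := K) c ξ hker horth hclast v δ hrep l h hl hh
  have hRw : Rw K ξ v = Submodule.span K
      ((fun k : ℤ => (MvPolynomial.monomial (expmap k) (1 : K))) '' (Finset.Icc l h : Set ℤ)) := by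
    rw [Rw, hset]
  have hinj : Set.InjOn (fun k : ℤ => (MvPolynomial.monomial (expmap k) (1 : K)))
      (Finset.Icc l h : Set ℤ) := by
    intro k hk k' hk' hkk
    have h1 : expmap k = expmap k' :=
      MvPolynomial.monomial_left_injective one_ne_zero hkk
    have h2 : ((δ (Fin.last n) + k * c (Fin.last n)).toNat : ℤ)
        = ((δ (Fin.last n) + k' * c (Fin.last n)).toNat : ℤ) := by
      have := congrFun (congrArg (fun (f : Fin (n+1) →₀ ℕ) => (f : Fin (n+1) → ℕ)) h1)
        (Fin.last n)
      simp only [hexp, Finsupp.coe_equivFunOnFinite_symm] at this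
      exact_mod_cast this
    rw [Int.toNat_of_nonneg (hfeas k hk _), Int.toNat_of_nonneg (hfeas k' hk' _)] at h2
    have hc0 : c (Fin.last n) ≠ 0 := ne_of_lt hclast
    have : k * c (Fin.last n) = k' * c (Fin.last n) := by linarith
    exact mul_right_cancel₀ hc0 this
  -- family indexed by the subtype
  have hli : LinearIndependent K
      (fun k : (Finset.Icc l h : Finset ℤ) => (MvPolynomial.monomial (expmap ↑k) (1 : K))) := by
    have hb := (MvPolynomial.basisMonomials (Fin (n+1)) K).linearIndependent
    have hcomp : Function.Injective (fun k : (Finset.Icc l h : Finset ℤ) => expmap ↑k) := by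
      intro a b hab
      have hab' : expmap ↑a = expmap ↑b := hab
      have := hinj (by exact_mod_cast a.2) (by exact_mod_cast b.2)
        (by simp only [hab'])
      exact Subtype.ext this
    have := hb.comp _ hcomp
    exact this
  have hrange : Set.range (fun k : (Finset.Icc l h : Finset ℤ) =>
      (MvPolynomial.monomial (expmap ↑k) (1 : K)))
      = (fun k : ℤ => (MvPolynomial.monomial (expmap k) (1 : K))) '' (Finset.Icc l h : Set ℤ) := by
    ext p
    constructor
    · rintro ⟨k, rfl⟩; exact ⟨↑k, by exact_mod_cast k.2, rfl⟩
    · rintro ⟨k, hk, rfl⟩; exact ⟨⟨k, by exact_mod_cast hk⟩, rfl⟩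
  constructor
  · rw [hRw, ← hrange, finrank_span_eq_card hli, Fintype.card_coe]
  · rw [hRw]
    exact FiniteDimensional.span_of_finite K (Set.Finite.image _ (Set.toFinite _))

lemma exists_hi (e a : ℤ) (he : 0 < e) : ∃ h : ℤ, ∀ k : ℤ, k * e ≤ a ↔ k ≤ h := by
  obtain ⟨lb, hlb1, hlb2⟩ := Int.exists_greatest_of_bdd (P := fun k => k * e ≤ a)
    (⟨|a|, by
      intro z hz
      rcases le_or_gt z 0 with h | h
      · exact h.trans (abs_nonneg a)
      · have h1 : z ≤ z * e := le_mul_of_one_le_right h.le he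
        have h2 : z * e ≤ |a| := hz.trans (le_abs_self a)
        linarith⟩)
    (⟨-|a|, by nlinarith [abs_nonneg a, neg_abs_le a]⟩)
  exact ⟨lb, fun k => ⟨fun hk => hlb2 k hk,
    fun hk => le_trans (mul_le_mul_of_nonneg_right hk he.le) hlb1⟩⟩

lemma exists_lo {n : ℕ} (c : Fin (n+1) → ℤ) (δ : Fin (n+1) → ℤ)
    (hdesc : ∀ i : Fin n, 0 ≤ c i.castSucc)
    (hok : ∀ i : Fin n, c i.castSucc = 0 → 0 ≤ δ i.castSucc)
    (i0 : Fin n) (hi0 : 0 < c i0.castSucc) :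
    ∃ l : ℤ, ∀ k : ℤ, (∀ i : Fin n, 0 ≤ δ i.castSucc + k * c i.castSucc) ↔ l ≤ k := by
  set Q : ℤ → Prop := fun k => ∀ i : Fin n, 0 ≤ δ i.castSucc + k * c i.castSucc with hQ
  have hmono : ∀ k k' : ℤ, k ≤ k' → Q k → Q k' := by
    intro k k' hkk hQk i
    have := hQk i
    have h2 : k * c i.castSucc ≤ k' * c i.castSucc :=
      mul_le_mul_of_nonneg_right hkk (hdesc i)
    linarith
  obtain ⟨lb, hlb1, hlb2⟩ := Int.exists_least_of_bdd (P := Q)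
    (⟨-|δ i0.castSucc|, by
      intro z hz
      have h1 := hz i0
      by_contra hlt
      push_neg at hlt
      have hz0 : z < 0 := by nlinarith [abs_nonneg (δ i0.castSucc)]
      have h2 : z * c i0.castSucc ≤ z := by nlinarith
      have h3 := le_abs_self (δ i0.castSucc)
      linarith⟩)
    (⟨∑ i : Fin n, |δ i.castSucc|, by
      intro i
      rcases eq_or_lt_of_le (hdesc i) with h | h
      · have h1 := hok i h.symm
        have h5 : (0:ℤ) ≤ ∑ j : Fin n, |δ j.castSucc| :=
          Finset.sum_nonneg (fun j _ => abs_nonneg (δ j.castSucc))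
        nlinarith
      · have hsum : |δ i.castSucc| ≤ ∑ j : Fin n, |δ j.castSucc| :=
          Finset.single_le_sum (fun j _ => abs_nonneg (δ j.castSucc)) (Finset.mem_univ i)
        have h4 := neg_abs_le (δ i.castSucc)
        have h5 : (0:ℤ) ≤ ∑ j : Fin n, |δ j.castSucc| :=
          Finset.sum_nonneg (fun j _ => abs_nonneg (δ j.castSucc))
        nlinarith⟩)
  exact ⟨lb, fun k => ⟨fun hk => hlb2 k hk, fun hk => hmono lb k hk hlb1⟩⟩


lemma two_point_sum {m : ℕ} (j l' : Fin m) (hjl : j ≠ l') (a b : ℝ) (x : Fin m → ℝ) :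
    ∑ i', (if i' = j then a else if i' = l' then b else 0) * x i' = a * x j + b * x l' := by
  classical
  have key : ∀ i' : Fin m, (if i' = j then a else if i' = l' then b else 0) * x i'
      = (if i' = j then a * x j else 0) + (if i' = l' then b * x l' else 0) := by
    intro i'
    by_cases h1 : i' = j
    · subst h1; rw [if_pos rfl, if_pos rfl, if_neg hjl, add_zero]
    · rw [if_neg h1, if_neg h1]
      by_cases h2 : i' = l'
      · subst h2; rw [if_pos rfl, if_pos rfl, zero_add]
      · rw [if_neg h2, if_neg h2, zero_mul, add_zero]
  rw [Finset.sum_congr rfl (fun i' _ => key i'), Finset.sum_add_distrib,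
    Finset.sum_ite_eq' Finset.univ j, Finset.sum_ite_eq' Finset.univ l']
  simp

lemma hi_shift (e a q h h' : ℤ) (he : 0 < e)
    (hh : ∀ k : ℤ, k * e ≤ a ↔ k ≤ h)
    (hh' : ∀ k : ℤ, k * e ≤ a + e * q ↔ k ≤ h') : h' = h + q := by
  have h1 : h' ≤ h + q := by
    have hx := (hh' h').mpr le_rfl
    have hy : (h' - q) * e ≤ a := by nlinarith
    have := (hh (h' - q)).mp hy
    omega
  have h2 : h + q ≤ h' := by
    have hx := (hh h).mpr le_rfl
    have hy : (h + q) * e ≤ a + e * q := by nlinarith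
    exact (hh' (h + q)).mp hy
  omega

lemma weight_eq_weightOf {n : ℕ} (ξ : Fin n → Fin (n+1) → ℕ) (j : Fin n)
    (α : Fin (n+1) →₀ ℕ) :
    (Finsupp.weight (fun i' => ξ j i') α) = weightOf ξ α j := by
  rw [Finsupp.weight_apply, Finsupp.sum_fintype]
  · simp [weightOf, mul_comm]
  · intro i'; simp


/-- Lemma 7: for a descendant loose edge, if `G ∈ R_w` and `H ∈ R_z` are coprime and `G`
is monic in the last variable, then `G·R_{z+i} + H·R_{w+i} = R_{w+z+i}` for all `i ∈ M`. -/
theorem mul_add_Rw_eq_monic {K : Type*} [Field K] {n : ℕ}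
    (c : Fin (n+1) → ℤ) (ξ : Fin n → Fin (n+1) → ℕ)
    (hyp : GradingHyp c ξ) (hdesc : IsDescendantDir c)
    (w z : Fin n → ℕ) (G H : MvPolynomial (Fin (n+1)) K)
    (hG : G ∈ Rw K ξ w) (hH : H ∈ Rw K ξ z)
    (hcop : IsRelPrime G H) (hmonic : MonicInLast G) :
    ∀ i ∈ weightSet c ξ,
      mulRw G (Rw K ξ (z + i)) ⊔ mulRw H (Rw K ξ (w + i)) = Rw K ξ (w + z + i) := by
  classical
  obtain ⟨hpos, hneg, hgcd, hind, horth⟩ := hyp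
  obtain ⟨hcnn, hclast⟩ := hdesc
  intro i hi
  obtain ⟨α, hαrep, hαcone⟩ := hi
  have hc0 : c ≠ 0 := by
    intro h
    rw [h] at hclast
    simp at hclast
  have hker : ∀ v : Fin (n+1) → ℤ, (∀ j, ∑ i', (ξ j i' : ℤ) * v i' = 0) →
      ∃ k : ℤ, ∀ i', v i' = k * c i' := ker_eq_c c ξ hind hgcd horth hc0
  obtain ⟨i0', hi0'⟩ := hpos
  have hi0ne : i0' ≠ Fin.last n := by rintro rfl; omega
  obtain ⟨i0, hi0⟩ := Fin.eq_castSucc_of_ne_last hi0ne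
  rw [← hi0] at hi0'
  obtain ⟨d, hd1, hdmax⟩ := hmonic
  have hGsupp : Finsupp.single (Fin.last n) d ∈ G.support :=
    MvPolynomial.mem_support_iff.mpr (by rw [hd1]; exact one_ne_zero)
  have hG0 : G ≠ 0 := by
    intro h
    rw [h] at hd1
    simp at hd1
  have hwτ : weightOf ξ (Finsupp.single (Fin.last n) d) = w :=
    (mem_Rw_iff ξ w G).mp hG _ hGsupp
  -- ℤ-representatives for the weights
  have hrep_of_wt : ∀ (v : Fin n → ℕ) (β : Fin (n+1) →₀ ℕ), weightOf ξ β = v →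
      ∀ j, ∑ i', (ξ j i' : ℤ) * (β i' : ℤ) = (v j : ℤ) := by
    intro v β hβ j
    have h1 : (∑ i', ξ j i' * β i' : ℕ) = v j := by rw [← hβ]; rfl
    calc ∑ i', (ξ j i' : ℤ) * (β i' : ℤ) = ((∑ i', ξ j i' * β i' : ℕ) : ℤ) := by push_cast; rfl
    _ = (v j : ℤ) := by rw [h1]
  set γz : Fin (n+1) → ℤ :=
    fun i' => ((Finsupp.single (Fin.last n) d : Fin (n+1) →₀ ℕ) i' : ℤ) with hγz
  have hγ0 : ∀ i1 : Fin n, γz i1.castSucc = 0 := by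
    intro i1
    simp [hγz, Finsupp.single_apply, ((Fin.castSucc_lt_last i1).ne' : Fin.last n ≠ i1.castSucc)]
  have hγlast : γz (Fin.last n) = (d : ℤ) := by simp [hγz]
  have hγrep : ∀ j, ∑ i', (ξ j i' : ℤ) * γz i' = (w j : ℤ) := hrep_of_wt w _ hwτ
  -- cone conditions for α
  have he0 : (0:ℤ) < -(c (Fin.last n)) := by omega
  have hok : ∀ i1 : Fin n, c i1.castSucc = 0 → 0 ≤ α i1.castSucc := by
    intro i1 h0
    have hη := hαcone (fun i' => if i' = i1.castSucc then (1:ℝ) else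
        if i' = Fin.last n then 0 else 0)
      (by intro i'; split_ifs <;> norm_num)
      (by
        rw [two_point_sum i1.castSucc (Fin.last n) (Fin.castSucc_lt_last i1).ne 1 0]
        rw [show ((c i1.castSucc : ℝ)) = ((0:ℤ):ℝ) by rw [← h0]]
        norm_num)
    rw [two_point_sum i1.castSucc (Fin.last n) (Fin.castSucc_lt_last i1).ne 1 0] at hη
    have : (0:ℝ) ≤ (α i1.castSucc : ℝ) := by linarith [hη]
    exact_mod_cast this
  have hMpos : ∀ i1 : Fin n, 0 < c i1.castSucc →
      0 ≤ (-(c (Fin.last n))) * α i1.castSucc + c i1.castSucc * α (Fin.last n) := by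
    intro i1 hc1
    have hη := hαcone (fun i' => if i' = i1.castSucc then ((-(c (Fin.last n)) : ℤ) : ℝ) else
        if i' = Fin.last n then ((c i1.castSucc : ℤ) : ℝ) else 0)
      (by
        intro i'
        split_ifs
        · exact_mod_cast he0.le
        · exact_mod_cast hc1.le
        · exact le_refl 0)
      (by
        rw [two_point_sum i1.castSucc (Fin.last n) (Fin.castSucc_lt_last i1).ne]
        have : ((-(c (Fin.last n)) : ℤ) : ℝ) * (c i1.castSucc : ℝ)
            + ((c i1.castSucc : ℤ) : ℝ) * (c (Fin.last n) : ℝ)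
            = (((-(c (Fin.last n))) * c i1.castSucc + c i1.castSucc * c (Fin.last n) : ℤ) : ℝ) := by
          push_cast; ring
        rw [this]
        norm_num
        ring)
    rw [two_point_sum i1.castSucc (Fin.last n) (Fin.castSucc_lt_last i1).ne] at hη
    have : (0:ℝ) ≤ (((-(c (Fin.last n))) * α i1.castSucc + c i1.castSucc * α (Fin.last n) : ℤ) : ℝ) := by
      push_cast
      push_cast at hη
      linarith
    exact_mod_cast this
  by_cases hH0 : H = 0
  · -- degenerate case: `H = 0`, so `G` is a unit, a nonzero constant and `w = 0`
    subst hH0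
    have hunit : IsUnit G := isRelPrime_zero_right.mp hcop
    obtain ⟨Ginv, hGG'⟩ := hunit.exists_right_inv
    have h0mem : (0 : Fin (n+1) →₀ ℕ) ∈ (G * Ginv).support := by
      rw [hGG']
      exact MvPolynomial.mem_support_iff.mpr (by simp)
    have hw0 : w = 0 := by
      have hmem := MvPolynomial.support_mul G Ginv h0mem
      rw [Finset.mem_add] at hmem
      obtain ⟨a, ha, b, hb, hab⟩ := hmem
      have ha0 : a = 0 := by
        apply Finsupp.ext
        intro i'
        have h := DFunLike.congr_fun hab i'
        simp only [Finsupp.add_apply, Finsupp.coe_zero, Pi.zero_apply] at h ⊢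
        omega
      have hwa := (mem_Rw_iff ξ w G).mp hG a ha
      rw [ha0] at hwa
      rw [← hwa]
      funext j
      simp [weightOf]
    have hsupp0 : ∀ a ∈ G.support, a = (0 : Fin (n+1) →₀ ℕ) := by
      intro a ha
      have hwa := (mem_Rw_iff ξ w G).mp hG a ha
      rw [hw0] at hwa
      obtain ⟨k, hk⟩ := hker (fun i' => (a i' : ℤ)) (by
        intro j
        have := hrep_of_wt 0 a hwa j
        simpa using this)
      have hklast := hk (Fin.last n)
      have hki0 := hk i0.castSucc
      have hal : (0:ℤ) ≤ (a (Fin.last n) : ℤ) := by positivity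
      have hai : (0:ℤ) ≤ (a i0.castSucc : ℤ) := by positivity
      have hk1 : k ≤ 0 := by nlinarith
      have hk2 : 0 ≤ k := by nlinarith
      have hk0 : k = 0 := le_antisymm hk1 hk2
      apply Finsupp.ext
      intro i'
      have h := hk i'
      rw [hk0, zero_mul] at h
      simpa using h
    have ha0 : G.coeff 0 ≠ 0 := by
      obtain ⟨m, hm⟩ := MvPolynomial.support_nonempty.mpr hG0
      have := hsupp0 m hm
      rw [this] at hm
      exact MvPolynomial.mem_support_iff.mp hm
    have hGC : G = MvPolynomial.C (G.coeff 0) := by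
      apply MvPolynomial.ext
      intro m
      rw [MvPolynomial.coeff_C]
      by_cases hm : m = 0
      · rw [if_pos hm.symm, hm]
      · rw [if_neg (fun h => hm h.symm)]
        by_contra hne
        exact hm (hsupp0 m (MvPolynomial.mem_support_iff.mpr hne))
    have hGsmul : ∀ Q : MvPolynomial (Fin (n+1)) K, G * Q = (G.coeff 0) • Q := by
      intro Q
      conv_lhs => rw [hGC]
      rw [MvPolynomial.C_mul']
    have hU : mulRw G (Rw K ξ (z + i)) = Rw K ξ (z + i) := by
      apply le_antisymm
      · rintro P hP
        obtain ⟨A, hA, rfl⟩ := Submodule.mem_map.mp hP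
        rw [LinearMap.mulLeft_apply, hGsmul]
        exact Submodule.smul_mem _ _ hA
      · intro P hP
        refine Submodule.mem_map.mpr ⟨(G.coeff 0)⁻¹ • P, Submodule.smul_mem _ _ hP, ?_⟩
        rw [LinearMap.mulLeft_apply, hGsmul, smul_smul,
          mul_inv_cancel₀ ha0, one_smul]
    have hV : mulRw (0 : MvPolynomial (Fin (n+1)) K) (Rw K ξ (w + i)) = ⊥ := by
      rw [mulRw, LinearMap.mulLeft_zero_eq_zero, Submodule.map_zero]
    rw [hU, hV, sup_bot_eq, hw0, zero_add]
  · -- main case : `H ≠ 0`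
    obtain ⟨β, hβ⟩ := MvPolynomial.support_nonempty.mpr hH0
    have hzβ : weightOf ξ β = z := (mem_Rw_iff ξ z H).mp hH β hβ
    set βz : Fin (n+1) → ℤ := fun i' => (β i' : ℤ) with hβz
    have hβrep : ∀ j, ∑ i', (ξ j i' : ℤ) * βz i' = (z j : ℤ) := hrep_of_wt z β hzβ
    have hβnn : ∀ i', (0:ℤ) ≤ βz i' := by intro i'; positivity
    -- ℤ-representatives of the four relevant weights, and interval data
    have hrep2 : ∀ j, ∑ i', (ξ j i' : ℤ) * (γz i' + α i') = (((w + i) j : ℕ) : ℤ) := by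
      intro j
      have hsplit : ∑ i', (ξ j i' : ℤ) * (γz i' + α i')
          = (∑ i', (ξ j i' : ℤ) * γz i') + ∑ i', (ξ j i' : ℤ) * α i' := by
        rw [← Finset.sum_add_distrib]
        apply Finset.sum_congr rfl
        intros; ring
      rw [hsplit, hγrep j, hαrep j]
      simp [Pi.add_apply]
    have hrep3 : ∀ j, ∑ i', (ξ j i' : ℤ) * (βz i' + α i') = (((z + i) j : ℕ) : ℤ) := by
      intro j
      have hsplit : ∑ i', (ξ j i' : ℤ) * (βz i' + α i')
          = (∑ i', (ξ j i' : ℤ) * βz i') + ∑ i', (ξ j i' : ℤ) * α i' := by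
        rw [← Finset.sum_add_distrib]
        apply Finset.sum_congr rfl
        intros; ring
      rw [hsplit, hβrep j, hαrep j]
      simp [Pi.add_apply]
    have hrep4 : ∀ j, ∑ i', (ξ j i' : ℤ) * (γz i' + (βz i' + α i'))
        = (((w + z + i) j : ℕ) : ℤ) := by
      intro j
      have hsplit : ∑ i', (ξ j i' : ℤ) * (γz i' + (βz i' + α i'))
          = (∑ i', (ξ j i' : ℤ) * γz i')
            + ((∑ i', (ξ j i' : ℤ) * βz i') + ∑ i', (ξ j i' : ℤ) * α i') := by
        rw [← Finset.sum_add_distrib, ← Finset.sum_add_distrib]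
        apply Finset.sum_congr rfl
        intros; ring
      rw [hsplit, hγrep j, hβrep j, hαrep j]
      simp only [Pi.add_apply]
      push_cast
      ring
    obtain ⟨h1, hh1⟩ := exists_hi (-(c (Fin.last n))) (α (Fin.last n)) he0
    obtain ⟨h2, hh2⟩ := exists_hi (-(c (Fin.last n))) (γz (Fin.last n) + α (Fin.last n)) he0
    obtain ⟨h3, hh3⟩ := exists_hi (-(c (Fin.last n))) (βz (Fin.last n) + α (Fin.last n)) he0
    obtain ⟨h4, hh4⟩ := exists_hi (-(c (Fin.last n)))
      (γz (Fin.last n) + (βz (Fin.last n) + α (Fin.last n))) he0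
    obtain ⟨l, hl⟩ := exists_lo c α hcnn hok i0 hi0'
    obtain ⟨L, hL⟩ := exists_lo c (fun i' => βz i' + α i') hcnn
      (fun i1 h => by have h1 := hok i1 h; have h2 := hβnn i1.castSucc; linarith)
      i0 hi0'
    have hl2 : ∀ k : ℤ, (∀ i1 : Fin n, 0 ≤ (γz i1.castSucc + α i1.castSucc)
        + k * c i1.castSucc) ↔ l ≤ k :=
      fun k => Iff.trans (forall_congr' fun i1 => by rw [hγ0 i1, zero_add]) (hl k)
    have hL4 : ∀ k : ℤ, (∀ i1 : Fin n, 0 ≤ (γz i1.castSucc + (βz i1.castSucc + α i1.castSucc))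
        + k * c i1.castSucc) ↔ L ≤ k :=
      fun k => Iff.trans (forall_congr' fun i1 => by rw [hγ0 i1, zero_add]) (hL k)
    -- ordering facts between the interval endpoints
    have hdnn : (0:ℤ) ≤ γz (Fin.last n) := by rw [hγlast]; positivity
    have h12 : h1 ≤ h2 := by
      have hx := (hh1 h1).mpr le_rfl
      exact (hh2 h1).mp (by linarith [hβnn (Fin.last n)])
    have h13 : h1 ≤ h3 := by
      have hx := (hh1 h1).mpr le_rfl
      exact (hh3 h1).mp (by linarith [hβnn (Fin.last n)])
    have h34 : h3 ≤ h4 := by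
      have hx := (hh3 h3).mpr le_rfl
      exact (hh4 h3).mp (by linarith)
    have hLl : L ≤ l := by
      have hfl := (hl l).mpr le_rfl
      refine (hL l).mp ?_
      intro i1
      have hx1 := hfl i1
      have hx2 := hβnn i1.castSucc
      linarith
    have hlh1 : l ≤ h1 + 1 := by
      refine (hl (h1 + 1)).mp ?_
      intro i1
      rcases (hcnn i1).eq_or_lt with hcz | hlt
      · have := hok i1 hcz.symm
        rw [← hcz, mul_zero, add_zero]
        exact this
      · by_contra hcon
        push_neg at hcon
        have hM := hMpos i1 hlt
        have h5 : ¬ ((h1 + 1) * (-(c (Fin.last n))) ≤ α (Fin.last n)) := by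
          intro hc
          have := (hh1 (h1 + 1)).mp hc
          omega
        push_neg at h5
        have t1 : (α i1.castSucc + (h1 + 1) * c i1.castSucc) * (-(c (Fin.last n)))
            ≤ (-1) * (-(c (Fin.last n))) :=
          mul_le_mul_of_nonneg_right (by linarith) he0.le
        have t2 : c i1.castSucc * 1
            ≤ c i1.castSucc * ((h1 + 1) * (-(c (Fin.last n))) - α (Fin.last n)) :=
          mul_le_mul_of_nonneg_left (by linarith) (by linarith)
        nlinarith [t1, t2, hM]
    -- the divisibility constraint from coprimality
    have hdvd : ((-(c (Fin.last n))) ∣ (d:ℤ)) ∨ ((-(c (Fin.last n))) ∣ βz (Fin.last n)) := by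
      by_contra hcon
      push_neg at hcon
      obtain ⟨hnd, hnb⟩ := hcon
      have hdG : (MvPolynomial.X (Fin.last n) : MvPolynomial (Fin (n+1)) K) ∣ G := by
        apply X_dvd_of_support
        intro a ha h0
        have hwa := (mem_Rw_iff ξ w G).mp hG a ha
        obtain ⟨k, hk⟩ := hker (fun i' => (a i' : ℤ) - γz i') (by
          intro j
          have e1 := hrep_of_wt w a hwa j
          have e2 := hγrep j
          have hsplit : ∑ i', (ξ j i' : ℤ) * ((a i' : ℤ) - γz i')
              = (∑ i', (ξ j i' : ℤ) * (a i' : ℤ)) - ∑ i', (ξ j i' : ℤ) * γz i' := by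
            rw [← Finset.sum_sub_distrib]
            apply Finset.sum_congr rfl
            intros; ring
          rw [hsplit, e1, e2, sub_self])
        apply hnd
        have hklast := hk (Fin.last n)
        rw [hγlast] at hklast
        have hzero : (a (Fin.last n) : ℤ) = 0 := by exact_mod_cast congrArg Nat.cast h0
        exact ⟨k, by linear_combination -hklast + hzero⟩
      have hdH : (MvPolynomial.X (Fin.last n) : MvPolynomial (Fin (n+1)) K) ∣ H := by
        apply X_dvd_of_support
        intro a ha h0
        have hwa := (mem_Rw_iff ξ z H).mp hH a ha
        obtain ⟨k, hk⟩ := hker (fun i' => (a i' : ℤ) - βz i') (by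
          intro j
          have e1 := hrep_of_wt z a hwa j
          have e2 := hβrep j
          have hsplit : ∑ i', (ξ j i' : ℤ) * ((a i' : ℤ) - βz i')
              = (∑ i', (ξ j i' : ℤ) * (a i' : ℤ)) - ∑ i', (ξ j i' : ℤ) * βz i' := by
            rw [← Finset.sum_sub_distrib]
            apply Finset.sum_congr rfl
            intros; ring
          rw [hsplit, e1, e2, sub_self])
        apply hnb
        have hklast := hk (Fin.last n)
        have hzero : (a (Fin.last n) : ℤ) = 0 := by exact_mod_cast congrArg Nat.cast h0
        exact ⟨k, by linear_combination -hklast + hzero⟩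
      have hXunit := hcop hdG hdH
      obtain ⟨P, hP⟩ := hXunit.exists_right_inv
      have := congrArg MvPolynomial.constantCoeff hP
      simp at this
    -- the key interval-length identity
    have hsh : h4 + h1 = h3 + h2 := by
      rcases hdvd with ⟨q, hq⟩ | ⟨q, hq⟩
      · have e2 : h2 = h1 + q := by
          refine hi_shift (-(c (Fin.last n))) (α (Fin.last n)) q h1 h2 he0 hh1 ?_
          intro k
          rw [show α (Fin.last n) + (-(c (Fin.last n))) * q
              = γz (Fin.last n) + α (Fin.last n) by rw [hγlast, hq]; ring]
          exact hh2 k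
        have e4 : h4 = h3 + q := by
          refine hi_shift (-(c (Fin.last n))) (βz (Fin.last n) + α (Fin.last n)) q h3 h4 he0 hh3 ?_
          intro k
          rw [show βz (Fin.last n) + α (Fin.last n) + (-(c (Fin.last n))) * q
              = γz (Fin.last n) + (βz (Fin.last n) + α (Fin.last n)) by rw [hγlast, hq]; ring]
          exact hh4 k
        omega
      · have e3 : h3 = h1 + q := by
          refine hi_shift (-(c (Fin.last n))) (α (Fin.last n)) q h1 h3 he0 hh1 ?_
          intro k
          rw [show α (Fin.last n) + (-(c (Fin.last n))) * q
              = βz (Fin.last n) + α (Fin.last n) by rw [hq]; ring]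
          exact hh3 k
        have e4 : h4 = h2 + q := by
          refine hi_shift (-(c (Fin.last n))) (γz (Fin.last n) + α (Fin.last n)) q h2 h4 he0 hh2 ?_
          intro k
          rw [show γz (Fin.last n) + α (Fin.last n) + (-(c (Fin.last n))) * q
              = γz (Fin.last n) + (βz (Fin.last n) + α (Fin.last n)) by rw [hq]; ring]
          exact hh4 k
        omega
    -- dimensions of the four graded pieces
    obtain ⟨hN1, hFD1⟩ := Rw_finrank (K := K) c ξ hker horth hclast i α hαrep l h1 hl hh1
    obtain ⟨hN2, hFD2⟩ := Rw_finrank (K := K) c ξ hker horth hclast (w + i)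
      (fun i' => γz i' + α i') hrep2 l h2 hl2 hh2
    obtain ⟨hN3, hFD3⟩ := Rw_finrank (K := K) c ξ hker horth hclast (z + i)
      (fun i' => βz i' + α i') hrep3 L h3 hL hh3
    obtain ⟨hN4, hFD4⟩ := Rw_finrank (K := K) c ξ hker horth hclast (w + z + i)
      (fun i' => γz i' + (βz i' + α i')) hrep4 L h4 hL4 hh4
    have hcard : (Finset.Icc L h4).card + (Finset.Icc l h1).card
        = (Finset.Icc L h3).card + (Finset.Icc l h2).card := by
      rw [Int.card_Icc, Int.card_Icc, Int.card_Icc, Int.card_Icc]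
      omega
    -- the two summands and their dimensions
    haveI := hFD1; haveI := hFD2; haveI := hFD3; haveI := hFD4
    have hGinj : Function.Injective ⇑(LinearMap.mulLeft K G) := by
      intro x y hxy
      have hxy' : G * x = G * y := by
        simpa only [LinearMap.mulLeft_apply] using hxy
      exact mul_left_cancel₀ hG0 hxy'
    have hHinj : Function.Injective ⇑(LinearMap.mulLeft K H) := by
      intro x y hxy
      have hxy' : H * x = H * y := by
        simpa only [LinearMap.mulLeft_apply] using hxy
      exact mul_left_cancel₀ hH0 hxy'
    set U := mulRw G (Rw K ξ (z + i)) with hUdef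
    set V := mulRw H (Rw K ξ (w + i)) with hVdef
    haveI : FiniteDimensional K U := Module.Finite.map _ _
    haveI : FiniteDimensional K V := Module.Finite.map _ _
    have hUrank : Module.finrank K U = (Finset.Icc L h3).card := by
      rw [← hN3]
      exact (LinearEquiv.finrank_eq
        (Submodule.equivMapOfInjective (LinearMap.mulLeft K G) hGinj (Rw K ξ (z + i)))).symm
    have hVrank : Module.finrank K V = (Finset.Icc l h2).card := by
      rw [← hN2]
      exact (LinearEquiv.finrank_eq
        (Submodule.equivMapOfInjective (LinearMap.mulLeft K H) hHinj (Rw K ξ (w + i)))).symm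
    -- the intersection is contained in (G*H)·R_i
    have hinter : U ⊓ V ≤ (Rw K ξ i).map (LinearMap.mulLeft K (G * H)) := by
      rintro P hP
      obtain ⟨hPU, hPV⟩ := Submodule.mem_inf.mp hP
      obtain ⟨A, hA, hGA⟩ := Submodule.mem_map.mp hPU
      obtain ⟨B, hB, hHB⟩ := Submodule.mem_map.mp hPV
      rw [LinearMap.mulLeft_apply] at hGA hHB
      have hHdvdA : H ∣ A := by
        have hdvdP : H ∣ G * A := ⟨B, by rw [hGA, ← hHB]⟩
        exact (hcop.symm).dvd_of_dvd_mul_left hdvdP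
      obtain ⟨C, hC⟩ := hHdvdA
      by_cases hC0 : C = 0
      · rw [hC0, mul_zero] at hC
        rw [hC, mul_zero] at hGA
        rw [← hGA]
        exact Submodule.zero_mem _
      · have hCRw : C ∈ Rw K ξ i := by
          rw [mem_Rw_iff]
          intro β' hβ'
          funext j
          have hHhom : H.IsWeightedHomogeneous (fun i' => ξ j i') (z j) := by
            intro dd hdd
            rw [weight_eq_weightOf,
              (mem_Rw_iff ξ z H).mp hH dd (MvPolynomial.mem_support_iff.mpr hdd)]
          have hAhom : (H * C).IsWeightedHomogeneous (fun i' => ξ j i') (z j + i j) := by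
            intro dd hdd
            rw [weight_eq_weightOf]
            rw [← hC] at hdd
            rw [(mem_Rw_iff ξ (z + i) A).mp hA dd (MvPolynomial.mem_support_iff.mpr hdd)]
            rfl
          obtain ⟨q, hq, hqs⟩ := isWeightedHomogeneous_of_mul _ hHhom hAhom hH0 hC0
          have hqi : q = i j := by omega
          have hval := hq (MvPolynomial.mem_support_iff.mp hβ')
          rw [weight_eq_weightOf] at hval
          rw [hval, hqi]
        exact ⟨C, hCRw, by rw [LinearMap.mulLeft_apply, ← hGA, hC]; ring⟩
    haveI : FiniteDimensional K ((Rw K ξ i).map (LinearMap.mulLeft K (G * H))) :=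
      Module.Finite.map _ _
    have hIle : Module.finrank K ↥(U ⊓ V) ≤ (Finset.Icc l h1).card :=
      le_trans (Submodule.finrank_mono hinter)
        (le_trans (Submodule.finrank_map_le _ _) (le_of_eq hN1))
    -- the sum is contained in R_{w+z+i}
    have hle : U ⊔ V ≤ Rw K ξ (w + z + i) := by
      apply sup_le
      · rintro P hP
        obtain ⟨A, hA, hGA⟩ := Submodule.mem_map.mp hP
        rw [LinearMap.mulLeft_apply] at hGA
        have := mul_mem_Rw ξ hG hA
        rw [show w + (z + i) = w + z + i from (add_assoc w z i).symm] at this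
        rw [← hGA]
        exact this
      · rintro P hP
        obtain ⟨B, hB, hHB⟩ := Submodule.mem_map.mp hP
        rw [LinearMap.mulLeft_apply] at hHB
        have := mul_mem_Rw ξ hH hB
        rw [show z + (w + i) = w + z + i from by
          rw [← add_assoc, add_comm z w]] at this
        rw [← hHB]
        exact this
    -- conclude by dimension count
    have hsum := Submodule.finrank_sup_add_finrank_inf_eq U V
    refine Submodule.eq_of_le_of_finrank_le hle ?_
    rw [hN4]
    rw [hUrank, hVrank] at hsum
    omega
end
end
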